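/- arXiv:1510.04381 — 2 statements merged into one kernel-verified Lean document; each statement's English description precedes it below -/
import Mathlib

section
/- Let A = K[a_1,…,a_n] be a solvable polynomial algebra. Then every left A-module M has projective dimension p.dim_A M ≤ n; consequently the global homological dimension of A satisfies gl.dim A ≤ n. -/
noncomputable section

open scoped BigOperators

/-- A monomial ordering on the exponent monoid `ℕ^n`: a well-ordering, total and transitive,
admitting `0` (i.e. the monomial `1`) as least element and compatible with addition of
exponents (i.e. with multiplication of monomials from both sides). -/
structure MonOrder (n : ℕ) where
  lt : (Fin n → ℕ) → (Fin n → ℕ) → Prop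
  wf : WellFounded lt
  lt_trans : ∀ {α β γ}, lt α β → lt β γ → lt α γ
  lt_total : ∀ α β, lt α β ∨ α = β ∨ lt β α
  zero_min : ∀ α : Fin n → ℕ, α ≠ 0 → lt 0 α
  add_right : ∀ {α β : Fin n → ℕ} (γ : Fin n → ℕ), lt α β → lt (α + γ) (β + γ)

/-- The ordered monomial `a₁^{α 1} ⋯ a_n^{α n}` in the generators `a`. -/
def SolvMono {A : Type*} [Ring A] {n : ℕ} (a : Fin n → A) (α : Fin n → ℕ) : A :=
  ((List.finRange n).map fun i => a i ^ α i).prod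

/-- A solvable polynomial algebra structure on a `K`-algebra `A` with generators
`gen 1, …, gen n`:  (S1) the ordered monomials in the generators form a PBW `K`-basis;
(S2) there is a monomial ordering `ord` such that
`a^α a^β = λ_{α,β} a^{α+β} + (terms ≺ a^{α+β})` with `λ_{α,β} ≠ 0`. -/
structure SolvAlg (K : Type*) [Field K] (A : Type*) [Ring A] [Algebra K A] (n : ℕ) where
  gen : Fin n → A
  basis : Module.Basis (Fin n → ℕ) K A
  basis_eq : ∀ α, basis α = SolvMono gen α
  ord : MonOrder n
  s2_lc : ∀ α β, basis.repr (basis α * basis β) (α + β) ≠ 0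
  s2_lower : ∀ α β δ, δ ∈ (basis.repr (basis α * basis β)).support → δ ≠ α + β →
    ord.lt δ (α + β)

namespace SolvAlg

variable {K : Type*} [Field K] {A : Type*} [Ring A] [Algebra K A] {n : ℕ}

/-- `α` is the exponent of the leading monomial of `f` (so in particular `f ≠ 0`). -/
def IsLM (S : SolvAlg K A n) (f : A) (α : Fin n → ℕ) : Prop :=
  α ∈ (S.basis.repr f).support ∧
    ∀ β ∈ (S.basis.repr f).support, β ≠ α → S.ord.lt β α

/-- Left division of monomials: `a^α |_L a^β` iff `a^β = LM(a^γ a^α)` for some monomial `a^γ`. -/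
def DvdL (S : SolvAlg K A n) (α β : Fin n → ℕ) : Prop :=
  ∃ γ, S.IsLM (S.basis γ * S.basis α) β

/-- `α ⪯ β` for the monomial ordering. -/
def LEord (S : SolvAlg K A n) (α β : Fin n → ℕ) : Prop :=
  α = β ∨ S.ord.lt α β

/-- `G` is a left Gröbner basis of the left ideal `N`. -/
def IsGBIdeal (S : SolvAlg K A n) (N : Ideal A) (G : Set A) : Prop :=
  G ⊆ (N : Set A) ∧ (0 : A) ∉ G ∧
    ∀ f ∈ N, f ≠ 0 → ∃ g ∈ G, ∃ α β, S.IsLM g α ∧ S.IsLM f β ∧ S.DvdL α β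

/-- The set of (exponents of) normal monomials mod `G`. -/
def NormalSet (S : SolvAlg K A n) (G : Set A) : Set (Fin n → ℕ) :=
  {γ | ∀ g ∈ G, ∀ α, S.IsLM g α → ¬ S.DvdL α γ}

/-- A minimal left Gröbner basis: no proper subset is again a left Gröbner basis. -/
def IsMinimalGBIdeal (S : SolvAlg K A n) (N : Ideal A) (G : Set A) : Prop :=
  IsGBIdeal S N G ∧ ∀ G' : Set A, G' ⊂ G → ¬ IsGBIdeal S N G'

/-- A reduced left Gröbner basis: minimal, monic, and all tails normal mod `G`. -/
def IsReducedGBIdeal (S : SolvAlg K A n) (N : Ideal A) (G : Set A) : Prop :=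
  IsMinimalGBIdeal S N G ∧
  (∀ g ∈ G, ∀ α, S.IsLM g α → S.basis.repr g α = 1) ∧
  (∀ g ∈ G, ∀ α, S.IsLM g α →
    g - S.basis α ∈ Submodule.span K ((fun γ => S.basis γ) '' NormalSet S G))

/-- The set of monomials `a^α e_i` occurring in an element `ξ` of the free module `A^s`. -/
def MSupp (S : SolvAlg K A n) {s : ℕ} (ξ : Fin s → A) : Set ((Fin n → ℕ) × Fin s) :=
  {p | S.basis.repr (ξ p.2) p.1 ≠ 0}

/-- `p` is the leading monomial of `ξ` with respect to the (left monomial) ordering `r`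
on the monomials of the free module `A^s`. -/
def IsLMMr (S : SolvAlg K A n) {s : ℕ}
    (r : ((Fin n → ℕ) × Fin s) → ((Fin n → ℕ) × Fin s) → Prop)
    (ξ : Fin s → A) (p : (Fin n → ℕ) × Fin s) : Prop :=
  p ∈ S.MSupp ξ ∧ ∀ q ∈ S.MSupp ξ, q ≠ p → r q p

/-- Left division of module monomials:  `a^α e_i |_L a^β e_j` iff `i = j` and
`a^β e_i = LM(a^γ · a^α e_i)` for some `a^γ`. -/
def MDvdL (S : SolvAlg K A n) {s : ℕ} (p q : (Fin n → ℕ) × Fin s) : Prop :=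
  p.2 = q.2 ∧ ∃ γ, S.IsLM (S.basis γ * S.basis p.1) q.1

/-- `G` is a left Gröbner basis of the set (submodule) `Nset` of the free module `A^s`,
with respect to the left monomial ordering `r`. -/
def IsGBrel (S : SolvAlg K A n) {s : ℕ}
    (r : ((Fin n → ℕ) × Fin s) → ((Fin n → ℕ) × Fin s) → Prop)
    (Nset : Set (Fin s → A)) (G : Set (Fin s → A)) : Prop :=
  G ⊆ Nset ∧ (0 : Fin s → A) ∉ G ∧
    ∀ ξ ∈ Nset, ξ ≠ 0 → ∃ γ ∈ G, ∃ p q, S.IsLMMr r γ p ∧ S.IsLMMr r ξ q ∧ S.MDvdL p q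

/-- The left S-polynomial `S_ℓ(ξ, ζ)` of `ξ, ζ` whose leading monomials are
`a^α e_i` and `a^β e_j` respectively. -/
def spolyData (S : SolvAlg K A n) {s : ℕ} (ξ ζ : Fin s → A)
    (α β : Fin n → ℕ) (i j : Fin s) : Fin s → A :=
  if i = j then
    (S.basis.repr ((S.basis ((fun k => max (α k) (β k)) - α) • ξ) i)
        (fun k => max (α k) (β k)))⁻¹ •
      (S.basis ((fun k => max (α k) (β k)) - α) • ξ) -
    (S.basis.repr ((S.basis ((fun k => max (α k) (β k)) - β) • ζ) i)
        (fun k => max (α k) (β k)))⁻¹ •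
      (S.basis ((fun k => max (α k) (β k)) - β) • ζ)
  else 0

end SolvAlg

/-- A left monomial ordering on the monomials `{a^α e_i}` of the free module `A^s`:
a total ordering compatible with the (left) multiplication by monomials of `A` and
restricting on each component to the monomial ordering of `A`. -/
structure ModOrder {K : Type*} [Field K] {A : Type*} [Ring A] [Algebra K A] {n : ℕ}
    (S : SolvAlg K A n) (s : ℕ) where
  lt : ((Fin n → ℕ) × Fin s) → ((Fin n → ℕ) × Fin s) → Prop
  lt_irrefl : ∀ p, ¬ lt p p
  lt_trans : ∀ {p q r}, lt p q → lt q r → lt p r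
  lt_total : ∀ p q, lt p q ∨ p = q ∨ lt q p
  compat : ∀ {α β : Fin n → ℕ} {i j : Fin s} (γ δ ε : Fin n → ℕ),
    lt (α, i) (β, j) → SolvAlg.IsLM S (S.basis γ * S.basis α) δ →
    SolvAlg.IsLM S (S.basis γ * S.basis β) ε → lt (δ, i) (ε, j)
  base : ∀ (α β : Fin n → ℕ) (i : Fin s), S.ord.lt α β → lt (α, i) (β, i)

noncomputable section



namespace SolvProof

/-- A transitive, total, well-founded relation. -/
structure TWO {P : Type*} (lt : P → P → Prop) : Prop where
  tr : ∀ {a b c}, lt a b → lt b c → lt a c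
  tot : ∀ a b, lt a b ∨ a = b ∨ lt b a
  wf : WellFounded lt

namespace TWO

variable {P : Type*} {lt : P → P → Prop}

theorem irr (h : TWO lt) (a : P) : ¬ lt a a := by
  intro hh
  exact (h.wf.isIrrefl).irrefl a hh

theorem asym (h : TWO lt) {a b : P} (h1 : lt a b) : ¬ lt b a := fun h2 => h.irr a (h.tr h1 h2)

theorem lt_of_ne (h : TWO lt) {a b : P} (hne : a ≠ b) (hnb : ¬ lt b a) : lt a b := by
  rcases h.tot a b with h1 | h1 | h1
  · exact h1
  · exact absurd h1 hne
  · exact absurd h1 hnb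

/-- le: reflexive closure -/
theorem le_tr (h : TWO lt) {a b c : P} (h1 : a = b ∨ lt a b) (h2 : b = c ∨ lt b c) : a = c ∨ lt a c := by
  rcases h1 with rfl | h1
  · exact h2
  · rcases h2 with rfl | h2
    · exact Or.inr h1
    · exact Or.inr (h.tr h1 h2)

theorem lt_of_le_of_lt (h : TWO lt) {a b c : P} (h1 : a = b ∨ lt a b) (h2 : lt b c) : lt a c := by
  rcases h1 with rfl | h1
  · exact h2
  · exact h.tr h1 h2

theorem lt_of_lt_of_le (h : TWO lt) {a b c : P} (h1 : lt a b) (h2 : b = c ∨ lt b c) : lt a c := by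
  rcases h2 with rfl | h2
  · exact h1
  · exact h.tr h1 h2

theorem eq_of_le_le (h : TWO lt) {a b : P} (h1 : a = b ∨ lt a b) (h2 : b = a ∨ lt b a) : a = b := by
  rcases h1 with rfl | h1
  · rfl
  · rcases h2 with rfl | h2
    · rfl
    · exact absurd h2 (h.asym h1)

/-- any nonempty finite set has a maximum element -/
theorem exists_max (h : TWO lt) {s : Finset P} (hs : s.Nonempty) :
    ∃ p ∈ s, ∀ q ∈ s, q ≠ p → lt q p := by
  classical
  induction s using Finset.induction_on with
  | empty => exact absurd hs (by simp)
  | @insert a s ha IH =>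
    rcases s.eq_empty_or_nonempty with rfl | hsne
    · refine ⟨a, by simp, ?_⟩
      intro q hq hqa
      simp only [Finset.mem_insert, Finset.notMem_empty, or_false] at hq
      exact absurd hq hqa
    · obtain ⟨p, hp, hpmax⟩ := IH hsne
      rcases h.tot a p with h1 | h1 | h1
      · refine ⟨p, Finset.mem_insert_of_mem hp, ?_⟩
        intro q hq hqp
        rcases Finset.mem_insert.1 hq with rfl | hq
        · exact h1
        · exact hpmax q hq hqp
      · subst h1
        exact absurd hp ha
      · refine ⟨a, Finset.mem_insert_self a s, ?_⟩
        intro q hq hqa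
        rcases Finset.mem_insert.1 hq with rfl | hq
        · exact absurd rfl hqa
        · rcases h.tot q p with h2 | h2 | h2
          · exact h.tr h2 h1
          · subst h2; exact h1
          · exact absurd (hpmax q hq (fun hh => h.irr q (hh ▸ h2))) (h.asym h2)

end TWO
section Alevel

variable {K : Type*} [Field K] {A : Type*} [Ring A] [Algebra K A] {n : ℕ} (S : SolvAlg K A n)

theorem two0 : TWO S.ord.lt :=
  ⟨fun h1 h2 => S.ord.lt_trans h1 h2, S.ord.lt_total, S.ord.wf⟩

theorem add_lt_left (γ : Fin n → ℕ) {a b : Fin n → ℕ} (h : S.ord.lt a b) :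
    S.ord.lt (γ + a) (γ + b) := by
  rw [add_comm γ a, add_comm γ b]; exact S.ord.add_right γ h

theorem add_le_le {a b c d : Fin n → ℕ} (h1 : a = b ∨ S.ord.lt a b)
    (h2 : c = d ∨ S.ord.lt c d) : a + c = b + d ∨ S.ord.lt (a + c) (b + d) := by
  rcases h1 with rfl | h1
  · rcases h2 with rfl | h2
    · exact Or.inl rfl
    · exact Or.inr (add_lt_left S a h2)
  · rcases h2 with rfl | h2
    · exact Or.inr (S.ord.add_right c h1)
    · exact Or.inr ((two0 S).tr (S.ord.add_right c h1) (add_lt_left S b h2))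

theorem repr_ne_zero {f : A} (hf : f ≠ 0) : S.basis.repr f ≠ 0 := by
  intro h
  apply hf
  have := congrArg S.basis.repr.symm h
  simpa using this

theorem isLM_exists {f : A} (hf : f ≠ 0) : ∃ α, S.IsLM f α := by
  have hne : (S.basis.repr f).support.Nonempty := by
    rw [Finsupp.support_nonempty_iff]
    exact repr_ne_zero S hf
  obtain ⟨p, hp, hm⟩ := (two0 S).exists_max hne
  exact ⟨p, hp, hm⟩

theorem isLM_repr_ne {f : A} {α} (h : S.IsLM f α) : S.basis.repr f α ≠ 0 :=
  Finsupp.mem_support_iff.1 h.1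

theorem isLM_le {f : A} {α β} (h : S.IsLM f α) (hβ : S.basis.repr f β ≠ 0) :
    β = α ∨ S.ord.lt β α := by
  by_cases hh : β = α
  · exact Or.inl hh
  · exact Or.inr (h.2 β (Finsupp.mem_support_iff.2 hβ) hh)

theorem isLM_unique {f : A} {α β} (h1 : S.IsLM f α) (h2 : S.IsLM f β) : α = β :=
  (two0 S).eq_of_le_le (isLM_le S h2 (isLM_repr_ne S h1)) (isLM_le S h1 (isLM_repr_ne S h2))

theorem isLM_basis (γ : Fin n → ℕ) : S.IsLM (S.basis γ) γ := by
  constructor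
  · rw [Finsupp.mem_support_iff, S.basis.repr_self]
    simp
  · intro β hβ hne
    exfalso
    rw [Finsupp.mem_support_iff, S.basis.repr_self, Finsupp.single_apply,
      if_neg (Ne.symm hne)] at hβ
    exact hβ rfl

theorem s2_le {θ μ δ : Fin n → ℕ} (hδ : S.basis.repr (S.basis θ * S.basis μ) δ ≠ 0) :
    δ = θ + μ ∨ S.ord.lt δ (θ + μ) := by
  by_cases h : δ = θ + μ
  · exact Or.inl h
  · exact Or.inr (S.s2_lower θ μ δ (Finsupp.mem_support_iff.2 hδ) h)

theorem repr_mul_expand (x y : A) (ν : Fin n → ℕ) :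
    S.basis.repr (x * y) ν =
      ∑ θ ∈ (S.basis.repr x).support, ∑ μ ∈ (S.basis.repr y).support,
        (S.basis.repr x θ * S.basis.repr y μ) * S.basis.repr (S.basis θ * S.basis μ) ν := by
  conv_lhs => rw [← S.basis.linearCombination_repr x, ← S.basis.linearCombination_repr y]
  rw [Finsupp.linearCombination_apply, Finsupp.linearCombination_apply, Finsupp.sum, Finsupp.sum,
    Finset.sum_mul, map_sum, Finset.sum_apply']
  refine Finset.sum_congr rfl fun θ _ => ?_
  rw [Finset.mul_sum, map_sum, Finset.sum_apply']
  refine Finset.sum_congr rfl fun μ _ => ?_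
  rw [smul_mul_assoc, mul_smul_comm, smul_smul, map_smul, Finsupp.smul_apply, smul_eq_mul]

theorem repr_mul_vanish {x y : A} {θ₀ μ₀ : Fin n → ℕ} (hx : S.IsLM x θ₀) (hy : S.IsLM y μ₀)
    {θ μ : Fin n → ℕ} (hθ : S.basis.repr x θ ≠ 0) (hμ : S.basis.repr y μ ≠ 0)
    (hne : (θ, μ) ≠ (θ₀, μ₀)) : S.basis.repr (S.basis θ * S.basis μ) (θ₀ + μ₀) = 0 := by
  by_contra hc
  have h1 : θ + μ = θ₀ + μ₀ ∨ S.ord.lt (θ + μ) (θ₀ + μ₀) :=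
    add_le_le S (isLM_le S hx hθ) (isLM_le S hy hμ)
  have h2 : S.ord.lt (θ + μ) (θ₀ + μ₀) := by
    rcases h1 with h1 | h1
    · exfalso
      -- then θ = θ₀ and μ = μ₀? No: need strictness. Show: one of them strict.
      rcases isLM_le S hx hθ with rfl | h3
      · rcases isLM_le S hy hμ with rfl | h4
        · exact hne rfl
        · exact (two0 S).irr _ (h1 ▸ add_lt_left S θ h4)
      · rcases isLM_le S hy hμ with rfl | h4
        · exact (two0 S).irr _ (h1 ▸ S.ord.add_right μ h3)
        · exact (two0 S).irr _ (h1 ▸ (two0 S).tr (S.ord.add_right μ h3) (add_lt_left S θ₀ h4))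
    · exact h1
  rcases s2_le S hc with h3 | h3
  · exact (two0 S).irr _ (h3 ▸ h2)
  · exact (two0 S).irr _ ((two0 S).tr h3 h2)

theorem repr_mul_top {x y : A} {θ₀ μ₀ : Fin n → ℕ} (hx : S.IsLM x θ₀) (hy : S.IsLM y μ₀) :
    S.basis.repr (x * y) (θ₀ + μ₀) ≠ 0 := by
  rw [repr_mul_expand]
  rw [Finset.sum_eq_single θ₀]
  · rw [Finset.sum_eq_single μ₀]
    · exact mul_ne_zero (mul_ne_zero (isLM_repr_ne S hx) (isLM_repr_ne S hy)) (S.s2_lc θ₀ μ₀)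
    · intro μ hμ hne
      rw [repr_mul_vanish S hx hy (isLM_repr_ne S hx) (Finsupp.mem_support_iff.1 hμ)
        (by simp [hne]), mul_zero]
    · intro h; exact absurd hy.1 h
  · intro θ hθ hne
    refine Finset.sum_eq_zero fun μ hμ => ?_
    rw [repr_mul_vanish S hx hy (Finsupp.mem_support_iff.1 hθ) (Finsupp.mem_support_iff.1 hμ)
      (by simp [hne]), mul_zero]
  · intro h; exact absurd hx.1 h

theorem repr_mul_le {x y : A} {θ₀ μ₀ ν : Fin n → ℕ} (hx : S.IsLM x θ₀) (hy : S.IsLM y μ₀)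
    (hν : S.basis.repr (x * y) ν ≠ 0) : ν = θ₀ + μ₀ ∨ S.ord.lt ν (θ₀ + μ₀) := by
  rw [repr_mul_expand] at hν
  obtain ⟨θ, hθ, h1⟩ := Finset.exists_ne_zero_of_sum_ne_zero hν
  obtain ⟨μ, hμ, h2⟩ := Finset.exists_ne_zero_of_sum_ne_zero h1
  have h3 : S.basis.repr (S.basis θ * S.basis μ) ν ≠ 0 := by
    intro h; rw [h, mul_zero] at h2; exact h2 rfl
  exact (two0 S).le_tr (s2_le S h3)
    ((two0 S).le_tr (Or.inl rfl)
      (add_le_le S (isLM_le S hx (Finsupp.mem_support_iff.1 hθ))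
        (isLM_le S hy (Finsupp.mem_support_iff.1 hμ))))

theorem isLM_mul {x y : A} {θ₀ μ₀ : Fin n → ℕ} (hx : S.IsLM x θ₀) (hy : S.IsLM y μ₀) :
    S.IsLM (x * y) (θ₀ + μ₀) := by
  constructor
  · exact Finsupp.mem_support_iff.2 (repr_mul_top S hx hy)
  · intro β hβ hne
    rcases repr_mul_le S hx hy (Finsupp.mem_support_iff.1 hβ) with h | h
    · exact absurd h hne
    · exact h

end Alevel
section Mlevel

variable {K : Type*} [Field K] {A : Type*} [Ring A] [Algebra K A] {n : ℕ}

/-- A compatible monomial ordering on the monomials of the free module with basis `E`. -/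
structure MOrd (S : SolvAlg K A n) (E : Type*) where
  lt : ((Fin n → ℕ) × E) → ((Fin n → ℕ) × E) → Prop
  two : TWO lt
  add : ∀ (γ : Fin n → ℕ) {p q}, lt p q → lt (γ + p.1, p.2) (γ + q.1, q.2)
  base : ∀ {θ θ' : Fin n → ℕ} (e : E), S.ord.lt θ θ' → lt (θ, e) (θ', e)

variable (S : SolvAlg K A n) {E : Type*}

/-- the coefficient of the monomial `a^{p.1} e_{p.2}` in `ξ` -/
def mcf (ξ : E →₀ A) (p : (Fin n → ℕ) × E) : K := S.basis.repr (ξ p.2) p.1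

theorem mcf_add (ξ ζ : E →₀ A) (p) : mcf S (ξ + ζ) p = mcf S ξ p + mcf S ζ p := by
  simp [mcf]

theorem mcf_zero (p) : mcf S (0 : E →₀ A) p = 0 := by simp [mcf]

theorem mcf_sub (ξ ζ : E →₀ A) (p) : mcf S (ξ - ζ) p = mcf S ξ p - mcf S ζ p := by
  simp [mcf]

theorem mcf_smul (x : A) (ξ : E →₀ A) (p) :
    mcf S (x • ξ) p = S.basis.repr (x * ξ p.2) p.1 := by
  simp [mcf, Finsupp.smul_apply]

theorem mcf_single_self (e : E) (x : A) (θ : Fin n → ℕ) :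
    mcf S (Finsupp.single e x) (θ, e) = S.basis.repr x θ := by
  simp [mcf]

theorem mcf_single_ne (e : E) (x : A) {θ : Fin n → ℕ} {f : E} (h : f ≠ e) :
    mcf S (Finsupp.single e x) (θ, f) = 0 := by
  classical
  simp [mcf, Finsupp.single_apply, Ne.symm h]

theorem eq_zero_of_mcf (ξ : E →₀ A) (h : ∀ p, mcf S ξ p = 0) : ξ = 0 := by
  ext e
  have : ∀ θ, S.basis.repr (ξ e) θ = 0 := fun θ => h (θ, e)
  have h2 : S.basis.repr (ξ e) = 0 := Finsupp.ext fun θ => this θ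
  have := congrArg S.basis.repr.symm h2
  simpa using this

/-- the finite set of monomials occurring in `ξ` -/
def msf (ξ : E →₀ A) : Finset ((Fin n → ℕ) × E) :=
  letI := Classical.decEq E
  letI := Classical.decEq ((Fin n → ℕ) × E)
  ξ.support.biUnion fun e => (S.basis.repr (ξ e)).support.image fun θ => (θ, e)

theorem mem_msf {ξ : E →₀ A} {p : (Fin n → ℕ) × E} : p ∈ msf S ξ ↔ mcf S ξ p ≠ 0 := by
  classical
  constructor
  · intro hp
    simp only [msf, Finset.mem_biUnion, Finset.mem_image] at hp
    obtain ⟨e, _, θ, hθ, rfl⟩ := hp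
    exact Finsupp.mem_support_iff.1 hθ
  · intro hp
    have h2 : ξ p.2 ≠ 0 := by
      intro h; apply hp; simp [mcf, h]
    simp only [msf, Finset.mem_biUnion, Finset.mem_image]
    exact ⟨p.2, Finsupp.mem_support_iff.2 h2, p.1, Finsupp.mem_support_iff.2 hp, rfl⟩

variable (mo : MOrd S E)

/-- `p` is the leading monomial of `ξ` -/
def IsMx (ξ : E →₀ A) (p : (Fin n → ℕ) × E) : Prop :=
  mcf S ξ p ≠ 0 ∧ ∀ q, mcf S ξ q ≠ 0 → q ≠ p → mo.lt q p

theorem isMx_exists {ξ : E →₀ A} (hξ : ξ ≠ 0) : ∃ p, IsMx S mo ξ p := by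
  have hne : (msf S ξ).Nonempty := by
    by_contra h
    rw [Finset.not_nonempty_iff_eq_empty] at h
    apply hξ
    apply eq_zero_of_mcf S
    intro p
    by_contra hp
    have : p ∈ msf S ξ := (mem_msf S).2 hp
    rw [h] at this
    exact absurd this (Finset.notMem_empty p)
  obtain ⟨p, hp, hm⟩ := mo.two.exists_max hne
  exact ⟨p, (mem_msf S).1 hp, fun q hq hne' => hm q ((mem_msf S).2 hq) hne'⟩

theorem isMx_le {ξ : E →₀ A} {p q} (h : IsMx S mo ξ p) (hq : mcf S ξ q ≠ 0) :
    q = p ∨ mo.lt q p := by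
  by_cases hh : q = p
  · exact Or.inl hh
  · exact Or.inr (h.2 q hq hh)

theorem isMx_unique {ξ : E →₀ A} {p q} (h1 : IsMx S mo ξ p) (h2 : IsMx S mo ξ q) : p = q :=
  mo.two.eq_of_le_le (isMx_le S mo h2 h1.1) (isMx_le S mo h1 h2.1)

theorem mo_lt_same_pos {θ θ' : Fin n → ℕ} {e : E} (h : mo.lt (θ, e) (θ', e)) (hne : θ ≠ θ') :
    S.ord.lt θ θ' := by
  rcases S.ord.lt_total θ θ' with h1 | h1 | h1
  · exact h1
  · exact absurd h1 hne
  · exact absurd (mo.two.tr h (mo.base e h1)) (mo.two.irr _)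

theorem isMx_isLM {ξ : E →₀ A} {p} (h : IsMx S mo ξ p) : S.IsLM (ξ p.2) p.1 := by
  constructor
  · exact Finsupp.mem_support_iff.2 h.1
  · intro β hβ hne
    have hq : mcf S ξ (β, p.2) ≠ 0 := Finsupp.mem_support_iff.1 hβ
    have hqp : (β, p.2) ≠ p := by
      intro hh
      exact hne (congrArg Prod.fst hh)
    have := h.2 _ hq hqp
    rcases p with ⟨α, e⟩
    exact mo_lt_same_pos S mo this hne

theorem isMx_smul {x : A} {θ₀ : Fin n → ℕ} {ξ : E →₀ A} {p} (hx : S.IsLM x θ₀)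
    (hp : IsMx S mo ξ p) : IsMx S mo (x • ξ) (θ₀ + p.1, p.2) := by
  have hLM : S.IsLM (ξ p.2) p.1 := isMx_isLM S mo hp
  constructor
  · rw [mcf_smul]
    exact repr_mul_top S hx hLM
  · rintro ⟨ν, e⟩ hq hne
    rw [mcf_smul] at hq
    have hξq2 : ξ e ≠ 0 := by
      intro h; apply hq; simp [h]
    obtain ⟨μ, hμ⟩ := isLM_exists S hξq2
    have hle : ν = θ₀ + μ ∨ S.ord.lt ν (θ₀ + μ) := repr_mul_le S hx hμ hq
    have hmem : mcf S ξ (μ, e) ≠ 0 := isLM_repr_ne S hμ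
    rcases isMx_le S mo hp hmem with heq | hlt
    · -- (μ, e) = p
      have he : e = p.2 := congrArg Prod.snd heq
      have hμp : μ = p.1 := congrArg Prod.fst heq
      subst he
      have hν : ν ≠ θ₀ + p.1 := by
        intro hh; exact hne (by rw [hh])
      rcases hle with h1 | h1
      · exact absurd (h1.trans (by rw [hμp])) hν
      · exact mo.base _ (by rw [← hμp]; exact h1)
    · have h5 := mo.add θ₀ hlt
      rcases hle with h1 | h1
      · rw [h1]
        exact h5
      · exact mo.two.tr (mo.base e h1) h5

end Mlevel
section Division

variable {K : Type*} [Field K] {A : Type*} [Ring A] [Algebra K A] {n : ℕ}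
variable (S : SolvAlg K A n) {E : Type*} (mo : MOrd S E)

theorem repr_algebraMap_mul (c : K) (x : A) (θ : Fin n → ℕ) :
    S.basis.repr (algebraMap K A c * x) θ = c * S.basis.repr x θ := by
  rw [← Algebra.smul_def, map_smul, Finsupp.smul_apply, smul_eq_mul]

theorem mcf_asmul (c : K) (ξ : E →₀ A) (q) :
    mcf S ((algebraMap K A c) • ξ) q = c * mcf S ξ q := by
  rw [mcf_smul, repr_algebraMap_mul, mcf]

theorem ne_zero_of_isMx {ξ : E →₀ A} {p} (h : IsMx S mo ξ p) : ξ ≠ 0 := by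
  intro hh
  rw [hh] at h
  exact h.1 (mcf_zero S p)

variable {ι : Type*} (g : ι → (E →₀ A)) (lmg : ι → ((Fin n → ℕ) × E))

/-- the weight of a module monomial of the free module over the index `ι` -/
def wtf (q : (Fin n → ℕ) × ι) : (Fin n → ℕ) × E := (q.1 + (lmg q.2).1, (lmg q.2).2)

theorem division (hlmg : ∀ i, IsMx S mo (g i) (lmg i)) (N : Submodule A (E →₀ A))
    (hgN : ∀ i, g i ∈ N)
    (hdvd : ∀ f ∈ N, f ≠ 0 → ∀ p, IsMx S mo f p → ∃ i, (lmg i).2 = p.2 ∧ (lmg i).1 ≤ p.1) :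
    ∀ p : (Fin n → ℕ) × E, ∀ f ∈ N, IsMx S mo f p →
      ∃ σ : ι →₀ A, Finsupp.linearCombination A g σ = f ∧
        ∀ q : (Fin n → ℕ) × ι, S.basis.repr (σ q.2) q.1 ≠ 0 →
          wtf lmg q = p ∨ mo.lt (wtf lmg q) p := by
  classical
  intro p0
  refine WellFounded.induction mo.two.wf
    (C := fun p => ∀ f ∈ N, IsMx S mo f p →
      ∃ σ : ι →₀ A, Finsupp.linearCombination A g σ = f ∧
        ∀ q : (Fin n → ℕ) × ι, S.basis.repr (σ q.2) q.1 ≠ 0 →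
          wtf lmg q = p ∨ mo.lt (wtf lmg q) p) p0 (fun p IH => ?_)
  intro f hfN hfp
  have hf0 : f ≠ 0 := ne_zero_of_isMx S mo hfp
  obtain ⟨i, hipos, hile⟩ := hdvd f hfN hf0 p hfp
  have hγadd : (p.1 - (lmg i).1) + (lmg i).1 = p.1 := by
    funext j
    exact Nat.sub_add_cancel (hile j)
  have hxi : IsMx S mo (S.basis (p.1 - (lmg i).1) • g i) (p.1, p.2) := by
    have h0 := isMx_smul S mo (isLM_basis S (p.1 - (lmg i).1)) (hlmg i)
    rw [hγadd, hipos] at h0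
    exact h0
  rw [Prod.mk.eta] at hxi
  have hwt : wtf lmg ((p.1 - (lmg i).1), i) = p := by
    have : wtf lmg ((p.1 - (lmg i).1), i) = ((p.1 - (lmg i).1) + (lmg i).1, (lmg i).2) := rfl
    rw [this, hγadd, hipos]
  set c : K := mcf S f p * (mcf S (S.basis (p.1 - (lmg i).1) • g i) p)⁻¹ with hcdef
  have hc : c ≠ 0 := mul_ne_zero hfp.1 (inv_ne_zero hxi.1)
  set y : A := algebraMap K A c * S.basis (p.1 - (lmg i).1) with hydef
  have hysmul : y • g i = (algebraMap K A c) • (S.basis (p.1 - (lmg i).1) • g i) := by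
    rw [hydef, mul_smul]
  have hrepry : ∀ θ, S.basis.repr y θ ≠ 0 → θ = p.1 - (lmg i).1 := by
    intro θ hθ
    rw [hydef, repr_algebraMap_mul, S.basis.repr_self] at hθ
    by_contra hne
    rw [Finsupp.single_apply, if_neg (fun hh => hne hh.symm), mul_zero] at hθ
    exact hθ rfl
  have hkey : ∀ q, mcf S (f - y • g i) q ≠ 0 → mo.lt q p := by
    intro q hq
    rw [mcf_sub, hysmul, mcf_asmul] at hq
    have hqp : q ≠ p := by
      rintro rfl
      apply hq
      rw [hcdef, mul_assoc, inv_mul_cancel₀ hxi.1, mul_one, sub_self]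
    have : mcf S f q ≠ 0 ∨ mcf S (S.basis (p.1 - (lmg i).1) • g i) q ≠ 0 := by
      by_contra hh
      push_neg at hh
      rw [hh.1, hh.2, mul_zero, sub_zero] at hq
      exact hq rfl
    rcases this with h | h
    · exact hfp.2 q h hqp
    · exact hxi.2 q h hqp
  by_cases hf'0 : f - y • g i = 0
  · refine ⟨Finsupp.single i y, ?_, ?_⟩
    · rw [Finsupp.linearCombination_single]
      rw [sub_eq_zero] at hf'0
      exact hf'0.symm
    · intro q hq
      by_cases hq2 : q.2 = i
      · rw [Finsupp.single_apply, if_pos hq2.symm] at hq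
        have hq1 : q.1 = p.1 - (lmg i).1 := hrepry q.1 hq
        have hqe : q = (p.1 - (lmg i).1, i) := by rw [← hq1, ← hq2]
        left
        rw [hqe, hwt]
      · rw [Finsupp.single_apply, if_neg (fun hh => hq2 hh.symm)] at hq
        simp at hq
  · obtain ⟨p', hp'⟩ := isMx_exists S mo hf'0
    have hlt : mo.lt p' p := hkey p' hp'.1
    obtain ⟨σ', hσ'Φ, hσ'w⟩ := IH p' hlt (f - y • g i) (N.sub_mem hfN (N.smul_mem y (hgN i))) hp'
    refine ⟨σ' + Finsupp.single i y, ?_, ?_⟩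
    · rw [map_add, hσ'Φ, Finsupp.linearCombination_single, sub_add_cancel]
    · intro q hq
      rw [Finsupp.add_apply, map_add, Finsupp.add_apply] at hq
      have : S.basis.repr (σ' q.2) q.1 ≠ 0 ∨ S.basis.repr ((Finsupp.single i y) q.2) q.1 ≠ 0 := by
        by_contra hh
        push_neg at hh
        rw [hh.1, hh.2] at hq
        simp at hq
      rcases this with h | h
      · rcases hσ'w q h with h1 | h1
        · exact Or.inr (h1 ▸ hlt)
        · exact Or.inr (mo.two.tr h1 hlt)
      · by_cases hq2 : q.2 = i
        · rw [Finsupp.single_apply, if_pos hq2.symm] at h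
          have hq1 : q.1 = p.1 - (lmg i).1 := hrepry q.1 h
          have hqe : q = (p.1 - (lmg i).1, i) := by rw [← hq1, ← hq2]
          left
          rw [hqe, hwt]
        · rw [Finsupp.single_apply, if_neg (fun hh => hq2 hh.symm)] at h
          simp at h

theorem range_eq_of_dvd (hlmg : ∀ i, IsMx S mo (g i) (lmg i)) (N : Submodule A (E →₀ A))
    (hgN : ∀ i, g i ∈ N)
    (hdvd : ∀ f ∈ N, f ≠ 0 → ∀ p, IsMx S mo f p → ∃ i, (lmg i).2 = p.2 ∧ (lmg i).1 ≤ p.1) :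
    LinearMap.range (Finsupp.linearCombination A g) = N := by
  apply le_antisymm
  · rw [Finsupp.range_linearCombination, Submodule.span_le]
    rintro _ ⟨i, rfl⟩
    exact hgN i
  · intro f hf
    by_cases hf0 : f = 0
    · rw [hf0]; exact Submodule.zero_mem _
    · obtain ⟨p, hp⟩ := isMx_exists S mo hf0
      obtain ⟨σ, hσ, -⟩ := division S mo g lmg hlmg N hgN hdvd p f hf hp
      exact ⟨σ, hσ⟩

end Division
section Syzygy

variable {K : Type*} [Field K] {A : Type*} [Ring A] [Algebra K A] {n : ℕ}
variable (S : SolvAlg K A n) {E : Type*} (mo : MOrd S E)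
variable {ι : Type*} (g : ι → (E →₀ A)) (lmg : ι → ((Fin n → ℕ) × E))

theorem mcf_sum {β : Type*} (s : Finset β) (F : β → (E →₀ A)) (q) :
    mcf S (∑ i ∈ s, F i) q = ∑ i ∈ s, mcf S (F i) q := by
  classical
  induction s using Finset.induction_on with
  | empty => simp [mcf_zero]
  | @insert a s ha IH =>
    rw [Finset.sum_insert ha, Finset.sum_insert ha, mcf_add, IH]

variable (wo : ι → ι → Prop)

/-- The Schreyer-type ordering on the monomials of the free module indexed by `ι`. -/
def sch (hwo : TWO wo) : MOrd S ι where
  lt q q' := mo.lt (wtf lmg q) (wtf lmg q') ∨ (wtf lmg q = wtf lmg q' ∧ wo q.2 q'.2)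
  two := by
    constructor
    · rintro a b c (h1 | ⟨h1, h1'⟩) (h2 | ⟨h2, h2'⟩)
      · exact Or.inl (mo.two.tr h1 h2)
      · exact Or.inl (h2 ▸ h1)
      · exact Or.inl (h1 ▸ h2)
      · exact Or.inr ⟨h1.trans h2, hwo.tr h1' h2'⟩
    · intro q q'
      rcases mo.two.tot (wtf lmg q) (wtf lmg q') with h | h | h
      · exact Or.inl (Or.inl h)
      · rcases hwo.tot q.2 q'.2 with h2 | h2 | h2
        · exact Or.inl (Or.inr ⟨h, h2⟩)
        · refine Or.inr (Or.inl ?_)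
          have h1 : q.1 + (lmg q.2).1 = q'.1 + (lmg q'.2).1 := congrArg Prod.fst h
          rw [h2] at h1
          have h3 : q.1 = q'.1 := add_right_cancel h1
          rw [← Prod.mk.eta (p := q), ← Prod.mk.eta (p := q'), h2, h3]
        · exact Or.inr (Or.inr (Or.inr ⟨h.symm, h2⟩))
      · exact Or.inr (Or.inr (Or.inl h))
    · have hlex : WellFounded (Prod.Lex mo.lt wo) := WellFounded.prod_lex mo.two.wf hwo.wf
      have hinv : WellFounded (InvImage (Prod.Lex mo.lt wo)
          (fun q : (Fin n → ℕ) × ι => (wtf lmg q, q.2))) := InvImage.wf _ hlex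
      refine Subrelation.wf ?_ hinv
      rintro q q' (h | ⟨h, h'⟩)
      · exact Prod.Lex.left _ _ h
      · show InvImage (Prod.Lex mo.lt wo) (fun q => (wtf lmg q, q.2)) q q'
        show Prod.Lex mo.lt wo (wtf lmg q, q.2) (wtf lmg q', q'.2)
        rw [h]
        exact Prod.Lex.right _ h'
  add := by
    rintro γ q q' (h | ⟨h, h'⟩)
    · refine Or.inl ?_
      have e1 : wtf lmg (γ + q.1, q.2) = (γ + (wtf lmg q).1, (wtf lmg q).2) := by
        simp [wtf, add_assoc]
      have e2 : wtf lmg (γ + q'.1, q'.2) = (γ + (wtf lmg q').1, (wtf lmg q').2) := by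
        simp [wtf, add_assoc]
      rw [e1, e2]
      exact mo.add γ h
    · refine Or.inr ⟨?_, h'⟩
      have e1 : wtf lmg (γ + q.1, q.2) = (γ + (wtf lmg q).1, (wtf lmg q).2) := by
        simp [wtf, add_assoc]
      have e2 : wtf lmg (γ + q'.1, q'.2) = (γ + (wtf lmg q').1, (wtf lmg q').2) := by
        simp [wtf, add_assoc]
      rw [e1, e2, h]
  base := by
    intro θ θ' i h
    exact Or.inl (mo.base _ (S.ord.add_right _ h))

theorem cancel (hlmg : ∀ i, IsMx S mo (g i) (lmg i)) (hwo : TWO wo)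
    (τ : ι →₀ A) (hτ : Finsupp.linearCombination A g τ = 0) {p}
    (hp : IsMx S (sch S mo lmg wo hwo) τ p) :
    ∃ h : ι, h ≠ p.2 ∧ wo h p.2 ∧ (lmg h).2 = (lmg p.2).2 ∧
      (lmg h).1 ≤ p.1 + (lmg p.2).1 := by
  classical
  set T : (Fin n → ℕ) × E := wtf lmg p with hT
  have hLM : S.IsLM (τ p.2) p.1 := isMx_isLM S (sch S mo lmg wo hwo) hp
  have hsum : (0 : K) = ∑ i ∈ τ.support, mcf S (τ i • g i) T := by
    have h1 : Finsupp.linearCombination A g τ = ∑ i ∈ τ.support, τ i • g i := by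
      rw [Finsupp.linearCombination_apply, Finsupp.sum]
    have h2 := congrArg (fun ξ => mcf S ξ T) (hτ.symm.trans h1)
    simpa [mcf_zero, mcf_sum] using h2
  have hmain : mcf S (τ p.2 • g p.2) T ≠ 0 := by
    have h0 := isMx_smul S mo hLM (hlmg p.2)
    exact h0.1
  have hp2mem : p.2 ∈ τ.support := by
    rw [Finsupp.mem_support_iff]
    intro h0
    apply hp.1
    show S.basis.repr (τ p.2) p.1 = 0
    rw [h0, map_zero]
    rfl
  have hex : ∃ h ∈ τ.support, h ≠ p.2 ∧ mcf S (τ h • g h) T ≠ 0 := by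
    by_contra hc
    push_neg at hc
    have h3 : ∑ i ∈ τ.support, mcf S (τ i • g i) T = mcf S (τ p.2 • g p.2) T := by
      refine Finset.sum_eq_single_of_mem p.2 hp2mem ?_
      exact fun b hb hbne => hc b hb hbne
    rw [h3] at hsum
    exact hmain hsum.symm
  obtain ⟨h, hhmem, hhne, hhmc⟩ := hex
  have hτh : τ h ≠ 0 := Finsupp.mem_support_iff.1 hhmem
  obtain ⟨θh, hθh⟩ := isLM_exists S hτh
  have htop : IsMx S mo (τ h • g h) (θh + (lmg h).1, (lmg h).2) := isMx_smul S mo hθh (hlmg h)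
  have hT1 := isMx_le S mo htop hhmc
  have hmem' : mcf S τ (θh, h) ≠ 0 := isLM_repr_ne S hθh
  have hne' : (θh, h) ≠ p := fun hh => hhne (congrArg Prod.snd hh)
  have hlt' := hp.2 _ hmem' hne'
  have hwtf : wtf lmg (θh, h) = (θh + (lmg h).1, (lmg h).2) := rfl
  rcases hlt' with hcase | ⟨heq, hw⟩
  · exfalso
    rw [hwtf] at hcase
    rcases hT1 with h1 | h1
    · rw [← h1] at hcase
      exact mo.two.irr T hcase
    · exact mo.two.irr T (mo.two.tr h1 hcase)
  · rw [hwtf] at heq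
    refine ⟨h, hhne, hw, ?_, ?_⟩
    · have := congrArg Prod.snd heq
      exact this
    · intro j
      have h1 : θh + (lmg h).1 = p.1 + (lmg p.2).1 := congrArg Prod.fst heq
      have h2 : θh j + (lmg h).1 j = p.1 j + (lmg p.2).1 j := by
        have := congrFun h1 j
        simpa using this
      show (lmg h).1 j ≤ p.1 j + (lmg p.2).1 j
      omega

theorem syzygy (hlmg : ∀ i, IsMx S mo (g i) (lmg i)) (N : Submodule A (E →₀ A))
    (hgN : ∀ i, g i ∈ N)
    (hdvd : ∀ f ∈ N, f ≠ 0 → ∀ p, IsMx S mo f p → ∃ i, (lmg i).2 = p.2 ∧ (lmg i).1 ≤ p.1)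
    (hwo : TWO wo) {i₀ h : ι} (hne : h ≠ i₀) (hw : wo h i₀)
    (hpos : (lmg h).2 = (lmg i₀).2) :
    ∃ σ : ι →₀ A, Finsupp.linearCombination A g σ = 0 ∧
      IsMx S (sch S mo lmg wo hwo) σ ((((lmg h).1 ⊔ (lmg i₀).1) - (lmg i₀).1), i₀) := by
  classical
  set J : Fin n → ℕ := (lmg h).1 ⊔ (lmg i₀).1 with hJ
  set u : Fin n → ℕ := J - (lmg i₀).1 with hu
  set u' : Fin n → ℕ := J - (lmg h).1 with hu'
  have huadd : u + (lmg i₀).1 = J := by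
    funext j
    exact Nat.sub_add_cancel (le_sup_right (a := (lmg h).1 j))
  have hu'add : u' + (lmg h).1 = J := by
    funext j
    exact Nat.sub_add_cancel (le_sup_left (b := (lmg i₀).1 j))
  set e₀ : E := (lmg i₀).2 with he₀
  have hxi : IsMx S mo (S.basis u • g i₀) (J, e₀) := by
    have h0 := isMx_smul S mo (isLM_basis S u) (hlmg i₀)
    rw [huadd] at h0
    exact h0
  have hxh : IsMx S mo (S.basis u' • g h) (J, e₀) := by
    have h0 := isMx_smul S mo (isLM_basis S u') (hlmg h)
    rw [hu'add, hpos] at h0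
    exact h0
  set c : K := mcf S (S.basis u • g i₀) (J, e₀) with hc
  set c' : K := mcf S (S.basis u' • g h) (J, e₀) with hc'
  set ft : E →₀ A := (algebraMap K A c') • (S.basis u • g i₀) -
    (algebraMap K A c) • (S.basis u' • g h) with hft
  have hftN : ft ∈ N := N.sub_mem
    (N.smul_mem _ (N.smul_mem _ (hgN i₀))) (N.smul_mem _ (N.smul_mem _ (hgN h)))
  have hftmc : ∀ q, mcf S ft q ≠ 0 → mo.lt q (J, e₀) := by
    intro q hq
    rw [hft, mcf_sub, mcf_asmul, mcf_asmul] at hq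
    have hqne : q ≠ (J, e₀) := by
      rintro rfl
      apply hq
      rw [← hc, ← hc', mul_comm]
      ring
    have : mcf S (S.basis u • g i₀) q ≠ 0 ∨ mcf S (S.basis u' • g h) q ≠ 0 := by
      by_contra hh
      push_neg at hh
      rw [hh.1, hh.2, mul_zero, mul_zero, sub_zero] at hq
      exact hq rfl
    rcases this with h1 | h1
    · exact hxi.2 q h1 hqne
    · exact hxh.2 q h1 hqne
  have hσ₃ : ∃ σ₃ : ι →₀ A, Finsupp.linearCombination A g σ₃ = ft ∧
      ∀ q : (Fin n → ℕ) × ι, S.basis.repr (σ₃ q.2) q.1 ≠ 0 →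
        mo.lt (wtf lmg q) (J, e₀) := by
    by_cases hft0 : ft = 0
    · refine ⟨0, by simp [hft0], ?_⟩
      intro q hq
      simp at hq
    · obtain ⟨pt, hpt⟩ := isMx_exists S mo hft0
      have hptlt : mo.lt pt (J, e₀) := hftmc pt hpt.1
      obtain ⟨σ₃, h1, h2⟩ := division S mo g lmg hlmg N hgN hdvd pt ft hftN hpt
      refine ⟨σ₃, h1, ?_⟩
      intro q hq
      rcases h2 q hq with h3 | h3
      · exact h3 ▸ hptlt
      · exact mo.two.tr h3 hptlt
  obtain ⟨σ₃, hσ₃Φ, hσ₃w⟩ := hσ₃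
  set σ : ι →₀ A := Finsupp.single i₀ (algebraMap K A c' * S.basis u) -
    Finsupp.single h (algebraMap K A c * S.basis u') - σ₃ with hσ
  have hΦσ : Finsupp.linearCombination A g σ = 0 := by
    rw [hσ, map_sub, map_sub, Finsupp.linearCombination_single, Finsupp.linearCombination_single,
      hσ₃Φ, hft, mul_smul, mul_smul]
    abel
  have hwtu : wtf lmg (u, i₀) = (J, e₀) := by
    show (u + (lmg i₀).1, (lmg i₀).2) = (J, e₀)
    rw [huadd, he₀]
  have hwtu' : wtf lmg (u', h) = (J, e₀) := by
    show (u' + (lmg h).1, (lmg h).2) = (J, e₀)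
    rw [hu'add, hpos, he₀]
  have hmcσ₃ : mcf S σ₃ (u, i₀) = 0 := by
    by_contra h0
    have := hσ₃w (u, i₀) h0
    rw [hwtu] at this
    exact mo.two.irr _ this
  have hmc1 : mcf S (Finsupp.single i₀ (algebraMap K A c' * S.basis u)) (u, i₀) = c' := by
    rw [mcf_single_self, repr_algebraMap_mul, S.basis.repr_self, Finsupp.single_eq_same, mul_one]
  have hmc2 : mcf S (Finsupp.single h (algebraMap K A c * S.basis u')) (u, i₀) = 0 :=
    mcf_single_ne S h _ (Ne.symm hne)
  have hσmc : mcf S σ (u, i₀) = c' := by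
    rw [hσ, mcf_sub, mcf_sub, hmc1, hmc2, hmcσ₃, sub_zero, sub_zero]
  refine ⟨σ, hΦσ, ?_, ?_⟩
  · rw [show ((((lmg h).1 ⊔ (lmg i₀).1) - (lmg i₀).1), i₀) = (u, i₀) from rfl]
    rw [hσmc]
    exact hxh.1
  · intro q hq hqne
    rw [hσ, mcf_sub, mcf_sub] at hq
    have h3 : mcf S (Finsupp.single i₀ (algebraMap K A c' * S.basis u)) q ≠ 0 ∨
        mcf S (Finsupp.single h (algebraMap K A c * S.basis u')) q ≠ 0 ∨
        mcf S σ₃ q ≠ 0 := by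
      by_contra hh
      push_neg at hh
      rw [hh.1, hh.2.1, hh.2.2] at hq
      simp at hq
    rcases h3 with h3 | h3 | h3
    · exfalso
      rcases q with ⟨ν, e⟩
      by_cases he : e = i₀
      · subst he
        rw [mcf_single_self, repr_algebraMap_mul] at h3
        have hν : ν = u := by
          by_contra hνne
          rw [S.basis.repr_self, Finsupp.single_apply, if_neg (fun hh => hνne hh.symm),
            mul_zero] at h3
          exact h3 rfl
        exact hqne (by rw [hν])
      · rw [mcf_single_ne S _ _ he] at h3
        exact h3 rfl
    · rcases q with ⟨ν, e⟩
      by_cases he : e = h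
      · subst he
        rw [mcf_single_self, repr_algebraMap_mul] at h3
        have hν : ν = u' := by
          by_contra hνne
          rw [S.basis.repr_self, Finsupp.single_apply, if_neg (fun hh => hνne hh.symm),
            mul_zero] at h3
          exact h3 rfl
        subst hν
        refine Or.inr ⟨?_, hw⟩
        rw [hwtu', hwtu]
      · rw [mcf_single_ne S _ _ he] at h3
        exact absurd rfl h3
    · refine Or.inl ?_
      have := hσ₃w q h3
      rw [hwtu]
      exact this

end Syzygy
section GB

variable {K : Type*} [Field K] {A : Type*} [Ring A] [Algebra K A] {n : ℕ}
variable (S : SolvAlg K A n) {E : Type*} (mo : MOrd S E)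

/-- the first `k` coordinates of `α` vanish -/
def lowc (k : ℕ) (α : Fin n → ℕ) : Prop := ∀ j : Fin n, (j : ℕ) < k → α j = 0

/-- The property that every nonzero element of `N` is "divisible" by an element of `N` whose
leading monomial has vanishing first `k` exponents. -/
def GBp (k : ℕ) (N : Submodule A (E →₀ A)) : Prop :=
  ∀ f ∈ N, f ≠ 0 → ∀ p, IsMx S mo f p → ∃ f', f' ∈ N ∧ f' ≠ 0 ∧ ∃ p', IsMx S mo f' p' ∧
    p'.2 = p.2 ∧ p'.1 ≤ p.1 ∧ lowc k p'.1

theorem GBp_mono {k k' : ℕ} (h : k' ≤ k) {N} (hN : GBp S mo k N) : GBp S mo k' N := by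
  intro f hf hf0 p hp
  obtain ⟨f', h1, h2, p', h3, h4, h5, h6⟩ := hN f hf hf0 p hp
  exact ⟨f', h1, h2, p', h3, h4, h5, fun j hj => h6 j (lt_of_lt_of_le hj h)⟩

theorem GBp_zero (N : Submodule A (E →₀ A)) : GBp S mo 0 N := by
  intro f hf hf0 p hp
  exact ⟨f, hf, hf0, p, hp, rfl, le_refl _, fun j hj => absurd hj (by omega)⟩

end GB

section Resolutions

universe uM uA uN uI

open CategoryTheory

variable {A : Type uA} [Ring A]

/-- Existence of a projective resolution of length `≤ q` in `ModuleCat.{uM} A`. -/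
def ResP (N : Type uN) [AddCommGroup N] [Module A N] (q : ℕ) : Prop :=
  ∃ (P : ℕ → ModuleCat.{uM} A) (d : ∀ i : ℕ, P (i + 1) ⟶ P i) (ε : P 0 →ₗ[A] N),
    (∀ i, CategoryTheory.Projective (P i)) ∧
    (∀ i, q < i → Subsingleton (P i)) ∧
    Function.Surjective ε ∧
    LinearMap.ker ε = LinearMap.range (d 0).hom ∧
    ∀ i : ℕ, LinearMap.ker (d i).hom = LinearMap.range (d (i + 1)).hom

theorem submodule_eq_of_subsingleton {M : Type*} [AddCommGroup M] [Module A M]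
    [Subsingleton M] (p q : Submodule A M) : p = q := by
  ext x
  have hx : x = 0 := Subsingleton.elim x 0
  subst hx
  simp

theorem projective_of_module_free (X : ModuleCat.{uM} A) (hX : Module.Free A X) :
    CategoryTheory.Projective X := by
  constructor
  intro E X' f e he
  have hsurj : Function.Surjective e := (ModuleCat.epi_iff_surjective e).1 he
  have hproj : Module.Projective A X := Module.Projective.of_basis (hX.chooseBasis)
  obtain ⟨h, hh⟩ := Module.projective_lifting_property e.hom f.hom hsurj
  exact ⟨ModuleCat.ofHom h, ModuleCat.hom_ext hh⟩

theorem resP_base (N : Type uN) [AddCommGroup N] [Module A N]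
    [Small.{uM} N] [Module.Free A N] : ResP.{uM} (A := A) N 0 := by
  haveI : Module.Free A (Shrink.{uM} N) := Module.Free.of_equiv ((Shrink.linearEquiv A N).symm)
  refine ⟨fun i => Nat.casesOn i (ModuleCat.of A (Shrink.{uM} N))
      (fun _ => ModuleCat.of A PUnit),
    fun i => ModuleCat.ofHom (0 : _ →ₗ[A] _),
    (((Shrink.linearEquiv A N).symm).symm : Shrink.{uM} N ≃ₗ[A] N).toLinearMap, ?_, ?_, ?_, ?_, ?_⟩
  · intro i
    cases i with
    | zero =>
      exact projective_of_module_free (ModuleCat.of A (Shrink.{uM} N))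
        (inferInstance : Module.Free A (Shrink.{uM} N))
    | succ m =>
      exact projective_of_module_free (ModuleCat.of A PUnit)
        ((Module.Free.of_basis (Module.Basis.empty (ι := PEmpty.{1}) PUnit.{uM+1})) : Module.Free A PUnit.{uM+1})
  · intro i hi
    cases i with
    | zero => omega
    | succ m => exact (inferInstance : Subsingleton PUnit)
  · exact ((Shrink.linearEquiv A N).symm).symm.surjective
  · rw [LinearEquiv.ker]
    exact (LinearMap.range_zero).symm
  · intro i
    exact submodule_eq_of_subsingleton _ _

theorem resP_splice [Small.{uM} A] {ι : Type uI} [Small.{uM} ι]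
    {N : Type uN} [AddCommGroup N] [Module A N] (φ : (ι →₀ A) →ₗ[A] N)
    (hsurj : Function.Surjective φ) {j : ℕ} (h : ResP.{uM} (A := A) ↥(LinearMap.ker φ) j) :
    ResP.{uM} (A := A) N (j + 1) := by
  obtain ⟨P, d, ε, hproj, hss, hsurj0, hker0, hker⟩ := h
  haveI : Small.{uM} (ι →₀ A) := small_of_injective (DFunLike.coe_injective)
  haveI : Module.Free A (Shrink.{uM} (ι →₀ A)) :=
    Module.Free.of_equiv ((Shrink.linearEquiv A (ι →₀ A)).symm)
  set eF : (ι →₀ A) ≃ₗ[A] Shrink.{uM} (ι →₀ A) := (Shrink.linearEquiv A (ι →₀ A)).symm with heF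
  refine ⟨fun i => Nat.casesOn i (ModuleCat.of A (Shrink.{uM} (ι →₀ A))) P,
    fun i => Nat.casesOn i
      (ModuleCat.ofHom (eF.toLinearMap ∘ₗ (LinearMap.ker φ).subtype ∘ₗ ε : _ →ₗ[A] _))
      (fun m => d m),
    (φ ∘ₗ eF.symm.toLinearMap : _ →ₗ[A] N), ?_, ?_, ?_, ?_, ?_⟩
  · intro i
    cases i with
    | zero =>
      exact projective_of_module_free (ModuleCat.of A (Shrink.{uM} (ι →₀ A)))
        (inferInstance : Module.Free A (Shrink.{uM} (ι →₀ A)))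
    | succ m => exact hproj m
  · intro i hi
    cases i with
    | zero => omega
    | succ m => exact hss m (by omega)
  · rw [LinearMap.coe_comp]
    exact hsurj.comp (eF.symm.surjective)
  · show LinearMap.ker (φ ∘ₗ eF.symm.toLinearMap) =
      LinearMap.range (eF.toLinearMap ∘ₗ (LinearMap.ker φ).subtype ∘ₗ ε)
    rw [LinearMap.ker_comp, LinearMap.range_comp, LinearMap.range_comp,
      LinearMap.range_eq_top.2 hsurj0, Submodule.map_top, Submodule.range_subtype]
    rw [Submodule.map_equiv_eq_comap_symm]
  · intro i
    cases i with
    | zero =>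
      show LinearMap.ker (eF.toLinearMap ∘ₗ (LinearMap.ker φ).subtype ∘ₗ ε) =
        LinearMap.range (d 0).hom
      rw [LinearMap.ker_comp_of_ker_eq_bot _ (LinearEquiv.ker eF),
        LinearMap.ker_comp, Submodule.ker_subtype, Submodule.comap_bot]
      exact hker0
    | succ m => exact hker m

end Resolutions
section Terminal

variable {K : Type*} [Field K] {A : Type*} [Ring A] [Algebra K A] {n : ℕ}
variable (S : SolvAlg K A n) {E : Type*} (mo : MOrd S E)

theorem wo_two (ι : Type*) : TWO (P := ι) (WellOrderingRel) := by
  haveI : IsWellOrder ι WellOrderingRel := WellOrderingRel.isWellOrder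
  refine ⟨fun {a b c} h1 h2 => ?_, fun a b => trichotomous a b, IsWellFounded.wf⟩
  exact _root_.trans h1 h2

theorem terminal (hn : 0 < n) {N : Submodule A (E →₀ A)} (hGB : GBp S mo (n - 1) N) :
    Module.Free A ↥N := by
  classical
  set v₀ : Fin n := ⟨n - 1, by omega⟩ with hv₀
  set ι := {e : E // ∃ a : ℕ, ∃ f, f ∈ N ∧ f ≠ 0 ∧ IsMx S mo f (Pi.single v₀ a, e)} with hι
  have hSene : ∀ e : ι,
      {a : ℕ | ∃ f, f ∈ N ∧ f ≠ 0 ∧ IsMx S mo f (Pi.single v₀ a, e.1)}.Nonempty :=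
    fun e => e.2
  have haemem : ∀ e : ι, ∃ f, f ∈ N ∧ f ≠ 0 ∧
      IsMx S mo f (Pi.single v₀ (sInf {a : ℕ | ∃ f, f ∈ N ∧ f ≠ 0 ∧
        IsMx S mo f (Pi.single v₀ a, e.1)}), e.1) :=
    fun e => Nat.sInf_mem (hSene e)
  choose g hgN hg0 hglm using haemem
  set lmg : ι → (Fin n → ℕ) × E := fun e => (Pi.single v₀ (sInf {a : ℕ | ∃ f, f ∈ N ∧ f ≠ 0 ∧
    IsMx S mo f (Pi.single v₀ a, e.1)}), e.1) with hlmg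
  have hlm : ∀ i : ι, IsMx S mo (g i) (lmg i) := fun i => hglm i
  have hdvd : ∀ f ∈ N, f ≠ 0 → ∀ p, IsMx S mo f p →
      ∃ i : ι, (lmg i).2 = p.2 ∧ (lmg i).1 ≤ p.1 := by
    intro f hf hf0 p hp
    obtain ⟨f', h1, h2, p', h3, h4, h5, h6⟩ := hGB f hf hf0 p hp
    have hsingle : p'.1 = Pi.single v₀ (p'.1 v₀) := by
      funext j
      by_cases hj : j = v₀
      · subst hj; simp
      · rw [Pi.single_eq_of_ne hj]
        refine h6 j ?_
        have hjn := j.isLt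
        have hne : (j : ℕ) ≠ n - 1 := fun hh => hj (Fin.ext hh)
        omega
    have hmx'' : IsMx S mo f' (Pi.single v₀ (p'.1 v₀), p.2) := by
      have he : p' = (Pi.single v₀ (p'.1 v₀), p.2) := by
        rw [← Prod.mk.eta (p := p'), ← hsingle, h4]
      rw [← he]
      exact h3
    refine ⟨⟨p.2, p'.1 v₀, f', h1, h2, hmx''⟩, rfl, ?_⟩
    intro j
    by_cases hj : j = v₀
    · subst hj
      have h7 : sInf {a : ℕ | ∃ f, f ∈ N ∧ f ≠ 0 ∧ IsMx S mo f (Pi.single v₀ a, p.2)} ≤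
          p'.1 v₀ := Nat.sInf_le ⟨f', h1, h2, hmx''⟩
      have h8 : (lmg ⟨p.2, p'.1 v₀, f', h1, h2, hmx''⟩).1 v₀ =
          sInf {a : ℕ | ∃ f, f ∈ N ∧ f ≠ 0 ∧ IsMx S mo f (Pi.single v₀ a, p.2)} := by
        rw [hlmg]
        simp
      rw [h8]
      exact le_trans h7 (h5 v₀)
    · have h8 : (lmg ⟨p.2, p'.1 v₀, f', h1, h2, hmx''⟩).1 j = 0 := by
        rw [hlmg]
        simp [Pi.single_eq_of_ne hj]
      rw [h8]
      exact Nat.zero_le _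
  have hwo : TWO (P := ι) WellOrderingRel := wo_two ι
  have hker : ∀ τ : ι →₀ A, Finsupp.linearCombination A g τ = 0 → τ = 0 := by
    intro τ hτ
    by_contra hτ0
    obtain ⟨p, hp⟩ := isMx_exists S (sch S mo lmg WellOrderingRel hwo) hτ0
    obtain ⟨h, hne, hw, hpos, hle⟩ := cancel S mo g lmg WellOrderingRel hlm hwo τ hτ hp
    exact hne (Subtype.ext hpos)
  have hrange := range_eq_of_dvd S mo g lmg hlm N hgN hdvd
  set Φ' : (ι →₀ A) →ₗ[A] ↥N := (Finsupp.linearCombination A g).codRestrict N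
    (fun σ => by rw [← hrange]; exact LinearMap.mem_range_self _ σ) with hΦ'
  have hkerbot : LinearMap.ker Φ' = ⊥ := by
    rw [hΦ', LinearMap.ker_codRestrict, eq_bot_iff]
    intro τ hτ
    have := hker τ (LinearMap.mem_ker.1 hτ)
    simp [this]
  have hinj : Function.Injective Φ' := by
    intro x y hxy
    have h1 : Φ' (x - y) = 0 := by rw [map_sub, hxy, sub_self]
    have h2 : x - y ∈ LinearMap.ker Φ' := h1
    rw [hkerbot, Submodule.mem_bot] at h2
    exact sub_eq_zero.1 h2
  have hsurjΦ : Function.Surjective Φ' := by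
    rintro ⟨y, hy⟩
    rw [← hrange] at hy
    obtain ⟨σ, hσ⟩ := hy
    refine ⟨σ, Subtype.ext ?_⟩
    rw [hΦ', LinearMap.codRestrict_apply]
    exact hσ
  exact Module.Free.of_equiv (LinearEquiv.ofBijective Φ' ⟨hinj, hsurjΦ⟩)

end Terminal

section Main

universe uM uA uK

open CategoryTheory

variable {K : Type uK} [Field K] {A : Type uA} [Ring A] [Algebra K A] {n : ℕ}
variable (S : SolvAlg K A n)

set_option maxHeartbeats 1000000 in
theorem main [Small.{uM} A] (hn : 0 < n) :
    ∀ (j : ℕ) (E : Type (max uA uM)) (mo : MOrd S E), Small.{uM} E →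
      ∀ (N : Submodule A (E →₀ A)), GBp S mo (n - 1 - j) N →
        ResP.{uM} (A := A) ↥N j := by
  intro j
  induction j with
  | zero =>
    intro E mo hsmE N hGB
    haveI := hsmE
    haveI : Small.{uM} (E →₀ A) := small_of_injective (DFunLike.coe_injective)
    haveI : Module.Free A ↥N := terminal S mo hn (by simpa using hGB)
    exact resP_base ↥N
  | succ j IH =>
    intro E mo hsmE N hGB
    haveI := hsmE
    haveI : Small.{uM} (E →₀ A) := small_of_injective (DFunLike.coe_injective)
    have hkn : n - 1 - (j + 1) < n := by omega
    set k := n - 1 - (j + 1) with hkdef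
    set v₀ : Fin n := ⟨k, hkn⟩ with hv₀
    set ι := {f : E →₀ A // f ∈ N ∧ f ≠ 0 ∧ ∃ p, IsMx S mo f p ∧ lowc k p.1} with hι
    set g : ι → (E →₀ A) := fun i => i.1 with hg
    have hspec : ∀ i : ι, ∃ p, IsMx S mo (g i) p ∧ lowc k p.1 := fun i => i.2.2.2
    choose lmg hlm hlow using hspec
    have hgN : ∀ i : ι, g i ∈ N := fun i => i.2.1
    have hdvd : ∀ f ∈ N, f ≠ 0 → ∀ p, IsMx S mo f p →
        ∃ i : ι, (lmg i).2 = p.2 ∧ (lmg i).1 ≤ p.1 := by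
      intro f hf hf0 p hp
      obtain ⟨f', h1, h2, p', h3, h4, h5, h6⟩ := hGB f hf hf0 p hp
      have hmem : ∃ p, IsMx S mo f' p ∧ lowc k p.1 := ⟨p', h3, h6⟩
      have heq : lmg ⟨f', h1, h2, hmem⟩ = p' := isMx_unique S mo (hlm _) h3
      exact ⟨⟨f', h1, h2, hmem⟩, by rw [heq]; exact h4, by rw [heq]; exact h5⟩
    haveI : IsWellOrder ι WellOrderingRel := WellOrderingRel.isWellOrder
    set wo : ι → ι → Prop := fun i i' => (lmg i).1 v₀ < (lmg i').1 v₀ ∨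
      ((lmg i).1 v₀ = (lmg i').1 v₀ ∧ WellOrderingRel i i') with hwodef
    have hwo : TWO wo := by
      constructor
      · rintro a b c (h1 | ⟨h1, h1'⟩) (h2 | ⟨h2, h2'⟩)
        · exact Or.inl (by omega)
        · exact Or.inl (by omega)
        · exact Or.inl (by omega)
        · exact Or.inr ⟨by omega, _root_.trans h1' h2'⟩
      · intro a b
        rcases Nat.lt_trichotomy ((lmg a).1 v₀) ((lmg b).1 v₀) with h | h | h
        · exact Or.inl (Or.inl h)
        · rcases (trichotomous a b : WellOrderingRel a b ∨ a = b ∨ WellOrderingRel b a)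
            with h2 | h2 | h2
          · exact Or.inl (Or.inr ⟨h, h2⟩)
          · exact Or.inr (Or.inl h2)
          · exact Or.inr (Or.inr (Or.inr ⟨h.symm, h2⟩))
        · exact Or.inr (Or.inr (Or.inl h))
      · have hlex : WellFounded (Prod.Lex (· < · : ℕ → ℕ → Prop)
            (WellOrderingRel (α := ι))) :=
          WellFounded.prod_lex (Nat.lt_wfRel.wf) (IsWellFounded.wf)
        refine Subrelation.wf ?_ (InvImage.wf (fun i : ι => ((lmg i).1 v₀, i)) hlex)
        rintro a b (h | ⟨h, h'⟩)
        · exact Prod.Lex.left _ _ h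
        · show Prod.Lex _ _ ((lmg a).1 v₀, a) ((lmg b).1 v₀, b)
          rw [h]
          exact Prod.Lex.right _ h'
    have hwole : ∀ i i', wo i i' → (lmg i).1 v₀ ≤ (lmg i').1 v₀ := by
      rintro i i' (h | ⟨h, -⟩) <;> omega
    have hrange := range_eq_of_dvd S mo g lmg hlm N hgN hdvd
    set Φ' : (ι →₀ A) →ₗ[A] ↥N := (Finsupp.linearCombination A g).codRestrict N
      (fun σ => by rw [← hrange]; exact LinearMap.mem_range_self _ σ) with hΦ'
    have hsurj' : Function.Surjective Φ' := by
      rintro ⟨y, hy⟩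
      rw [← hrange] at hy
      obtain ⟨σ, hσ⟩ := hy
      refine ⟨σ, Subtype.ext ?_⟩
      rw [hΦ', LinearMap.codRestrict_apply]
      exact hσ
    have hkerΦ' : LinearMap.ker Φ' = LinearMap.ker (Finsupp.linearCombination A g) :=
      LinearMap.ker_codRestrict _ _ _
    have hGB' : GBp S (sch S mo lmg wo hwo) (n - 1 - j)
        (LinearMap.ker (Finsupp.linearCombination A g)) := by
      have hstep : GBp S (sch S mo lmg wo hwo) (k + 1)
          (LinearMap.ker (Finsupp.linearCombination A g)) := by
        intro τ hτ hτ0 p hp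
        obtain ⟨h, hne, hw, hpos, hle⟩ :=
          cancel S mo g lmg wo hlm hwo τ (LinearMap.mem_ker.1 hτ) hp
        obtain ⟨σ, hσ0, hσmx⟩ := syzygy S mo g lmg wo hlm N hgN hdvd hwo hne hw hpos
        refine ⟨σ, LinearMap.mem_ker.2 hσ0, ne_zero_of_isMx S (sch S mo lmg wo hwo) hσmx,
          _, hσmx, rfl, ?_, ?_⟩
        · intro j'
          have h1 := hle j'
          simp only [Pi.add_apply] at h1
          show ((lmg h).1 ⊔ (lmg p.2).1 - (lmg p.2).1) j' ≤ p.1 j'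
          have h2 : ((lmg h).1 ⊔ (lmg p.2).1 - (lmg p.2).1) j' =
              ((lmg h).1 j' ⊔ (lmg p.2).1 j') - (lmg p.2).1 j' := rfl
          rw [h2, show ((lmg h).1 j' ⊔ (lmg p.2).1 j') = max ((lmg h).1 j') ((lmg p.2).1 j') from rfl]
          omega
        · intro j' hj'
          show ((lmg h).1 ⊔ (lmg p.2).1 - (lmg p.2).1) j' = 0
          have h2 : ((lmg h).1 ⊔ (lmg p.2).1 - (lmg p.2).1) j' =
              ((lmg h).1 j' ⊔ (lmg p.2).1 j') - (lmg p.2).1 j' := rfl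
          rw [h2, show ((lmg h).1 j' ⊔ (lmg p.2).1 j') = max ((lmg h).1 j') ((lmg p.2).1 j') from rfl]
          rcases Nat.lt_or_ge (j' : ℕ) k with hlt | hge
          · have e1 := hlow h j' hlt
            have e2 := hlow p.2 j' hlt
            omega
          · have hjk : (j' : ℕ) = k := by omega
            have hj'v : j' = v₀ := Fin.ext hjk
            subst hj'v
            have := hwole h p.2 hw
            omega
      exact GBp_mono S _ (by omega) hstep
    have hres' := IH ι (sch S mo lmg wo hwo) inferInstance
      (LinearMap.ker (Finsupp.linearCombination A g)) hGB'
    have hres'' : ResP.{uM} (A := A) ↥(LinearMap.ker Φ') j := by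
      rw [hkerΦ']
      exact hres'
    exact resP_splice Φ' hsurj' hres''

end Main
section Assemble

universe uM uA uK

open CategoryTheory

variable {K : Type uK} [Field K] {A : Type uA} [Ring A] [Algebra K A] {n : ℕ}

/-- the trivial resolution of a subsingleton module -/
theorem resP_trivial (N : Type uM) [AddCommGroup N] [Module A N] [Subsingleton N] :
    ResP.{uM} (A := A) N 0 := by
  refine ⟨fun _ => ModuleCat.of A PUnit, fun _ => ModuleCat.ofHom (0 : _ →ₗ[A] _), (0 : _ →ₗ[A] N),
    ?_, ?_, ?_, ?_, ?_⟩
  · intro i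
    exact projective_of_module_free (ModuleCat.of A PUnit)
      ((Module.Free.of_basis (Module.Basis.empty (ι := PEmpty.{1}) PUnit.{uM+1})) : Module.Free A PUnit.{uM+1})
  · intro i hi
    exact (inferInstance : Subsingleton PUnit)
  · intro m
    exact ⟨0, Subsingleton.elim _ m⟩
  · exact submodule_eq_of_subsingleton _ _
  · intro i
    exact submodule_eq_of_subsingleton _ _

theorem n_zero_case (S : SolvAlg K A n) (hn : n = 0) (M : Type*) [AddCommGroup M] [Module A M] :
    Module.Free A M := by
  subst hn
  have hbasis1 : S.basis (0 : Fin 0 → ℕ) = 1 := by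
    rw [S.basis_eq]
    show (((List.finRange 0).map fun i => S.gen i ^ (0 : Fin 0 → ℕ) i).prod) = 1
    simp
  have ha : ∀ a : A, a = algebraMap K A (S.basis.repr a 0) := by
    intro a
    have h2 : S.basis.repr ((S.basis.repr a 0) • S.basis 0) = S.basis.repr a := by
      rw [map_smul, S.basis.repr_self, Finsupp.smul_single, smul_eq_mul, mul_one]
      refine Finsupp.ext fun θ => ?_
      have hθ : θ = (0 : Fin 0 → ℕ) := Subsingleton.elim _ _
      subst hθ
      simp
    rw [Algebra.algebraMap_eq_smul_one, ← hbasis1]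
    exact (S.basis.repr.injective h2).symm
  have hsurj : Function.Surjective (algebraMap K A) :=
    fun a => ⟨S.basis.repr a 0, (ha a).symm⟩
  have hA : ∀ a : A, IsUnit a ∨ a = 0 := by
    intro a
    obtain ⟨c, rfl⟩ := hsurj a
    by_cases hc : c = 0
    · right; rw [hc, map_zero]
    · left
      refine ⟨⟨algebraMap K A c, algebraMap K A c⁻¹, ?_, ?_⟩, rfl⟩
      · rw [← map_mul, mul_inv_cancel₀ hc, map_one]
      · rw [← map_mul, inv_mul_cancel₀ hc, map_one]
  haveI : Nontrivial A := ⟨1, 0, by rw [← hbasis1]; exact S.basis.ne_zero _⟩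
  letI dr : DivisionRing A := DivisionRing.ofIsUnitOrEqZero hA
  exact @Module.Free.of_divisionRing A M dr _ (by exact inferInstance)

/-- The base monomial ordering on the free module over positions `E₀`. -/
def mo0 (S : SolvAlg K A n) (E₀ : Type*) : MOrd S E₀ := by
  haveI : IsWellOrder E₀ WellOrderingRel := WellOrderingRel.isWellOrder
  exact
  { lt := fun p q => S.ord.lt p.1 q.1 ∨ (p.1 = q.1 ∧ WellOrderingRel p.2 q.2)
    two := by
      constructor
      · rintro ⟨a1, a2⟩ ⟨b1, b2⟩ ⟨c1, c2⟩ (h1 | ⟨h1, h1'⟩) (h2 | ⟨h2, h2'⟩)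
        · exact Or.inl (S.ord.lt_trans h1 h2)
        · rcases h2 with rfl
          exact Or.inl h1
        · rcases h1 with rfl
          exact Or.inl h2
        · rcases h1 with rfl
          exact Or.inr ⟨h2, _root_.trans h1' h2'⟩
      · rintro ⟨a1, a2⟩ ⟨b1, b2⟩
        rcases S.ord.lt_total a1 b1 with h | h | h
        · exact Or.inl (Or.inl h)
        · rcases (trichotomous a2 b2 : WellOrderingRel a2 b2 ∨ a2 = b2 ∨ WellOrderingRel b2 a2)
            with h2 | h2 | h2
          · exact Or.inl (Or.inr ⟨h, h2⟩)
          · exact Or.inr (Or.inl (by rw [h, h2]))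
          · exact Or.inr (Or.inr (Or.inr ⟨h.symm, h2⟩))
        · exact Or.inr (Or.inr (Or.inl h))
      · have hlex : WellFounded (Prod.Lex S.ord.lt (WellOrderingRel (α := E₀))) :=
          WellFounded.prod_lex S.ord.wf IsWellFounded.wf
        refine Subrelation.wf ?_ (InvImage.wf (fun p : (Fin n → ℕ) × E₀ => (p.1, p.2)) hlex)
        rintro ⟨a1, a2⟩ ⟨b1, b2⟩ (h | ⟨h, h'⟩)
        · exact Prod.Lex.left _ _ h
        · show Prod.Lex _ _ (a1, a2) (b1, b2)
          rcases h with rfl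
          exact Prod.Lex.right _ h'
    add := by
      rintro γ ⟨a1, a2⟩ ⟨b1, b2⟩ (h | ⟨h, h'⟩)
      · exact Or.inl (add_lt_left S γ h)
      · rcases h with rfl
        exact Or.inr ⟨rfl, h'⟩
    base := by
      intro θ θ' e h
      exact Or.inl h }

end Assemble
section Final

universe uM uA uK

open CategoryTheory

variable {K : Type uK} [Field K] {A : Type uA} [Ring A] [Algebra K A] {n : ℕ}

theorem solv_resolution (S : SolvAlg K A n) (M : Type uM) [AddCommGroup M] [Module A M] :
    ∃ q ≤ n, ResP.{uM} (A := A) M q := by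
  classical
  by_cases hMs : Subsingleton M
  · exact ⟨0, Nat.zero_le n, resP_trivial M⟩
  rcases Nat.eq_zero_or_pos n with hn0 | hn
  · haveI : Module.Free A M := n_zero_case S hn0 M
    exact ⟨0, Nat.zero_le n, resP_base M⟩
  · haveI : Nontrivial M := not_subsingleton_iff_nontrivial.mp hMs
    obtain ⟨m₀, hm₀⟩ := exists_ne (0 : M)
    have hinjK : Function.Injective (fun k : K => (algebraMap K A k) • m₀) := by
      intro k k' h
      by_contra hne
      have hc : k - k' ≠ 0 := sub_ne_zero.2 hne
      have h0 : (algebraMap K A (k - k')) • m₀ = 0 := by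
        have h' : (algebraMap K A k) • m₀ = (algebraMap K A k') • m₀ := h
        rw [map_sub, sub_smul, h', sub_self]
      have hm : m₀ = 0 := by
        have h1 : (algebraMap K A (k - k')⁻¹) • ((algebraMap K A (k - k')) • m₀) = m₀ := by
          rw [smul_smul, ← map_mul, inv_mul_cancel₀ hc, map_one, one_smul]
        rw [h0, smul_zero] at h1
        exact h1.symm
      exact hm₀ hm
    haveI hsmK : Small.{uM} K := small_of_injective hinjK
    haveI hsmF : Small.{uM} ((Fin n → ℕ) →₀ K) := small_of_injective (DFunLike.coe_injective)
    haveI hsmA : Small.{uM} A := small_of_injective (S.basis.repr.injective)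
    haveI hsmE : Small.{uM} (ULift.{uA} M) := small_of_injective (ULift.down_injective)
    set φ : ((ULift.{uA} M) →₀ A) →ₗ[A] M :=
      Finsupp.linearCombination A (fun e : ULift.{uA} M => e.down) with hφ
    have hsurj : Function.Surjective φ := by
      intro m
      refine ⟨Finsupp.single (ULift.up m) 1, ?_⟩
      rw [hφ, Finsupp.linearCombination_single, one_smul]
    have hGB : GBp S (mo0 S (ULift.{uA} M)) (n - 1 - (n - 1)) (LinearMap.ker φ) := by
      have he : n - 1 - (n - 1) = 0 := by omega
      rw [he]
      exact GBp_zero S _ _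
    have hres := main S hn (n - 1) (ULift.{uA} M) (mo0 S (ULift.{uA} M)) inferInstance
      (LinearMap.ker φ) hGB
    have h2 := resP_splice (A := A) φ hsurj hres
    have he2 : n - 1 + 1 = n := by omega
    rw [he2] at h2
    exact ⟨n, le_refl n, h2⟩

end Final

end SolvProof

open CategoryTheory

/-- Theorem 3.3.1: over a solvable polynomial algebra `A = K[a_1,…,a_n]`, every left
`A`-module `M` has projective dimension `≤ n` (encoded by the existence of a projective
resolution `0 → P_q → ⋯ → P_0 → M → 0` of length `q ≤ n`); consequently
`gl.dim A ≤ n`. -/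
theorem solvAlg_global_dimension {K : Type*} [Field K] {A : Type*} [Ring A] [Algebra K A]
    {n : ℕ} (S : SolvAlg K A n) :
    ∀ M : ModuleCat A, ∃ q ≤ n, ∃ (P : ℕ → ModuleCat A)
      (d : ∀ i : ℕ, P (i + 1) ⟶ P i) (ε : P 0 ⟶ M),
      (∀ i, CategoryTheory.Projective (P i)) ∧
      (∀ i, q < i → Subsingleton (P i)) ∧
      Function.Surjective ε ∧
      LinearMap.ker ε.hom = LinearMap.range (d 0).hom ∧
      ∀ i : ℕ, LinearMap.ker (d i).hom = LinearMap.range (d (i + 1)).hom := by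
  intro M
  obtain ⟨q, hq, P, d, ε, h1, h2, h3, h4, h5⟩ := SolvProof.solv_resolution S ↥M
  exact ⟨q, hq, P, d, ModuleCat.ofHom ε, h1, h2, h3, h4, h5⟩
end
end
end

section
/- Let A = K[a_1,…,a_n] be a solvable polynomial algebra whose monomial ordering is a graded monomial ordering ≺_gr with respect to a positive-degree function d (so that A is ℕ-filtered by F_pA = K-span{a^α ∈ 𝔅 | d(a^α) ≤ p}), let L = ⊕_{i=1}^s A e_i be a filtered free A-module with filtration F_qL = K-span{a^α e_i | d(a^α) + b_i ≤ q} for assigned b_1,…,b_s ∈ ℕ, and let ≺_{e-gr} be a graded left monomial ordering on 𝔅(e). If 𝒢 = {g_1,…,g_m} is a left Gröbner basis, with respect to ≺_{e-gr}, of the submodule N = Σ_{i=1}^m A g_i of L, then 𝒢 is a standard basis of N with respect to the filtration F_qN = N ∩ F_qL induced by FL; that is, F_qN = Σ_{j=1}^m (Σ_{p + n_j ≤ q} F_pA) g_j for every q ∈ ℕ, where n_j is the fil-degree of g_j. -/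
noncomputable section

open scoped BigOperators

/-- The degree of an exponent `α` with respect to the positive-degree function determined
by `dv`. -/
def degOf {n : ℕ} (dv : Fin n → ℕ) (α : Fin n → ℕ) : ℕ := ∑ i, α i * dv i


section StdBasisAux

lemma degOf_add {n : ℕ} (dv α β : Fin n → ℕ) :
    degOf dv (α + β) = degOf dv α + degOf dv β := by
  simp [degOf, add_mul, Finset.sum_add_distrib]

lemma exists_top {σ : Type*} (r : σ → σ → Prop)
    (htr : ∀ {a b c}, r a b → r b c → r a c)
    (htot : ∀ a b, r a b ∨ a = b ∨ r b a) :
    ∀ (F : Finset σ), F.Nonempty → ∃ p ∈ F, ∀ x ∈ F, x ≠ p → r x p := by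
  classical
  intro F
  induction F using Finset.induction_on with
  | empty => rintro ⟨x, hx⟩; cases hx
  | @insert a F ha ih =>
    intro _
    rcases F.eq_empty_or_nonempty with rfl | hFne
    · exact ⟨a, by simp, by simp⟩
    · obtain ⟨p, hpF, hp⟩ := ih hFne
      rcases htot p a with h | h | h
      · refine ⟨a, Finset.mem_insert_self _ _, ?_⟩
        intro x hx hxa
        rcases Finset.mem_insert.mp hx with rfl | hxF
        · exact absurd rfl hxa
        · rcases eq_or_ne x p with rfl | hxp
          · exact h
          · exact htr (hp x hxF hxp) h
      · refine ⟨p, Finset.mem_insert_of_mem hpF, ?_⟩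
        intro x hx hxp
        rcases Finset.mem_insert.mp hx with rfl | hxF
        · exact absurd h.symm hxp
        · exact hp x hxF hxp
      · refine ⟨p, Finset.mem_insert_of_mem hpF, ?_⟩
        intro x hx hxp
        rcases Finset.mem_insert.mp hx with rfl | hxF
        · exact h
        · exact hp x hxF hxp

namespace SolvAlg

variable {K : Type*} [Field K] {A : Type*} [Ring A] [Algebra K A] {n : ℕ}

lemma isLM_mul_basis (S : SolvAlg K A n) (γ α : Fin n → ℕ) :
    S.IsLM (S.basis γ * S.basis α) (γ + α) :=
  ⟨Finsupp.mem_support_iff.mpr (S.s2_lc γ α), fun β hβ hne => S.s2_lower γ α β hβ hne⟩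

lemma ord_irrefl (S : SolvAlg K A n) (α : Fin n → ℕ) : ¬ S.ord.lt α α :=
  fun h => (S.ord.wf.isIrrefl).irrefl α h

lemma IsLM.unique {S : SolvAlg K A n} {f : A} {α β : Fin n → ℕ}
    (h1 : S.IsLM f α) (h2 : S.IsLM f β) : α = β := by
  by_contra hne
  exact S.ord_irrefl α (S.ord.lt_trans (h2.2 α h1.1 hne) (h1.2 β h2.1 (Ne.symm hne)))

/-- Expansion of the coefficients of `a^γ · h` in terms of the coefficients of `h`. -/
lemma repr_basis_mul (S : SolvAlg K A n) (γ : Fin n → ℕ) (h : A) (δ : Fin n → ℕ) :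
    S.basis.repr (S.basis γ * h) δ =
      ∑ α' ∈ (S.basis.repr h).support,
        S.basis.repr h α' * S.basis.repr (S.basis γ * S.basis α') δ := by
  conv_lhs => rw [← S.basis.linearCombination_repr h, Finsupp.linearCombination_apply,
    Finsupp.sum, Finset.mul_sum]
  rw [map_sum, Finsupp.finset_sum_apply]
  refine Finset.sum_congr rfl fun α' _ => ?_
  rw [mul_smul_comm, map_smul, Finsupp.smul_apply, smul_eq_mul]

lemma repr_basis_mul_support (S : SolvAlg K A n) {γ : Fin n → ℕ} {h : A} {δ : Fin n → ℕ}
    (hδ : S.basis.repr (S.basis γ * h) δ ≠ 0) :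
    ∃ α' ∈ (S.basis.repr h).support, S.basis.repr (S.basis γ * S.basis α') δ ≠ 0 := by
  rw [S.repr_basis_mul γ h δ] at hδ
  by_contra hc
  push_neg at hc
  exact hδ (Finset.sum_eq_zero fun α' hα' => by rw [hc α' hα', mul_zero])

lemma repr_basis_mul_deg (S : SolvAlg K A n) (dv : Fin n → ℕ)
    (hgr : ∀ α β, S.ord.lt α β → degOf dv α ≤ degOf dv β)
    {γ : Fin n → ℕ} {h : A} {δ : Fin n → ℕ}
    (hδ : S.basis.repr (S.basis γ * h) δ ≠ 0) :
    ∃ α' ∈ (S.basis.repr h).support, degOf dv δ ≤ degOf dv γ + degOf dv α' := by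
  obtain ⟨α', hα', hne⟩ := S.repr_basis_mul_support hδ
  refine ⟨α', hα', ?_⟩
  rcases eq_or_ne δ (γ + α') with rfl | hne2
  · rw [degOf_add]
  · have := hgr _ _ (S.s2_lower γ α' δ (Finsupp.mem_support_iff.mpr hne) hne2)
    rwa [degOf_add] at this

/-- The monomial support of an element of the free module, as a `Finset`. -/
def MFsupp (S : SolvAlg K A n) {s : ℕ} (ξ : Fin s → A) : Finset ((Fin n → ℕ) × Fin s) :=
  Finset.univ.biUnion fun i => (S.basis.repr (ξ i)).support.image fun α => (α, i)

lemma mem_MFsupp {S : SolvAlg K A n} {s : ℕ} {ξ : Fin s → A} {p : (Fin n → ℕ) × Fin s} :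
    p ∈ S.MFsupp ξ ↔ S.basis.repr (ξ p.2) p.1 ≠ 0 := by
  obtain ⟨α, i⟩ := p
  constructor
  · intro hp
    simp only [MFsupp, Finset.mem_biUnion, Finset.mem_univ, true_and, Finset.mem_image,
      Finsupp.mem_support_iff] at hp
    obtain ⟨i', α', hα', heq⟩ := hp
    obtain ⟨h1, h2⟩ := Prod.mk.injEq .. ▸ heq
    subst h1; subst h2; exact hα'
  · intro hp
    simp only [MFsupp, Finset.mem_biUnion, Finset.mem_univ, true_and, Finset.mem_image,
      Finsupp.mem_support_iff]
    exact ⟨i, α, hp, rfl⟩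

lemma exists_LMM (S : SolvAlg K A n) {s : ℕ} (O : ModOrder S s) (ξ : Fin s → A)
    (hξ : ξ ≠ 0) : ∃ p, S.IsLMMr O.lt ξ p := by
  have hne : (S.MFsupp ξ).Nonempty := by
    obtain ⟨i, hi⟩ := Function.ne_iff.mp hξ
    have h2 : S.basis.repr (ξ i) ≠ 0 := by
      intro h
      exact hi (by simpa using congrArg S.basis.repr.symm h)
    obtain ⟨α, hα⟩ := Finsupp.ne_iff.mp h2
    exact ⟨(α, i), mem_MFsupp.mpr (by simpa using hα)⟩
  obtain ⟨p, hp, hmax⟩ := exists_top O.lt (fun h1 h2 => O.lt_trans h1 h2) O.lt_total _ hne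
  exact ⟨p, mem_MFsupp.mp hp, fun x hx hxp => hmax x (mem_MFsupp.mpr hx) hxp⟩

lemma IsLMMr.unique {S : SolvAlg K A n} {s : ℕ} {O : ModOrder S s} {ξ : Fin s → A}
    {p p' : (Fin n → ℕ) × Fin s} (h1 : S.IsLMMr O.lt ξ p) (h2 : S.IsLMMr O.lt ξ p') :
    p = p' := by
  by_contra hne
  exact O.lt_irrefl p (O.lt_trans (h2.2 p h1.1 hne) (h1.2 p' h2.1 (Ne.symm hne)))

end SolvAlg

end StdBasisAux

/-- Theorem 5.4.8: let `A` be a solvable polynomial algebra whose monomial ordering is a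
graded monomial ordering with respect to the positive-degree function given by `dv` (so
that `A` is `ℕ`-filtered by `F_pA = K`-span`{a^α : d(a^α) ≤ p}`), let `L = A^s` be the
filtered free module determined by the shifts `b`, and let `≺_{e-gr}` be a graded left
monomial ordering on the monomials of `L`.  If `𝒢 = {g_1,…,g_m}` is a left Gröbner basis
of the submodule `N = Σ A g_j` with respect to `≺_{e-gr}`, then `𝒢` is a standard basis
of `N` with respect to the induced filtration:
`F_qN = N ∩ F_qL = Σ_j (Σ_{p + n_j ≤ q} F_pA) g_j` for all `q`, where `n_j` is the
fil-degree of `g_j`. -/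
theorem solvAlg_GB_is_standard_basis {K : Type*} [Field K] {A : Type*} [Ring A]
    [Algebra K A] {n : ℕ} (S : SolvAlg K A n)
    (dv : Fin n → ℕ) (hdv : ∀ i, 0 < dv i)
    (hgr : ∀ α β, S.ord.lt α β → degOf dv α ≤ degOf dv β)
    {s : ℕ} (b : Fin s → ℕ) (O : ModOrder S s)
    (hOgr : ∀ p q : (Fin n → ℕ) × Fin s,
      O.lt p q → degOf dv p.1 + b p.2 ≤ degOf dv q.1 + b q.2)
    {m : ℕ} (g : Fin m → (Fin s → A)) (hg0 : ∀ j, g j ≠ 0)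
    (hGB : SolvAlg.IsGBrel S O.lt
      ((Submodule.span A (Set.range g) : Submodule A (Fin s → A)) : Set (Fin s → A))
      (Set.range g))
    (nj : Fin m → ℕ)
    (hnj₁ : ∀ (j : Fin m) (α : Fin n → ℕ) (i : Fin s),
      S.basis.repr (g j i) α ≠ 0 → degOf dv α + b i ≤ nj j)
    (hnj₂ : ∀ j : Fin m, ∃ (α : Fin n → ℕ) (i : Fin s),
      S.basis.repr (g j i) α ≠ 0 ∧ degOf dv α + b i = nj j) :
    ∀ (q : ℕ) (ξ : Fin s → A),
      (ξ ∈ Submodule.span A (Set.range g) ∧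
        ∀ (α : Fin n → ℕ) (i : Fin s), S.basis.repr (ξ i) α ≠ 0 → degOf dv α + b i ≤ q) ↔
      ∃ f : Fin m → A,
        (∀ j, f j ∈ Submodule.span K {x : A | ∃ α, degOf dv α + nj j ≤ q ∧ x = S.basis α}) ∧
        ξ = ∑ j, f j • g j := by
  classical
  intro q ξ
  constructor
  · -- forward direction: division by the Gröbner basis
    rintro ⟨hmem, hdeg⟩
    -- the finite set of module monomials of fil-degree ≤ q
    set T : Finset ((Fin n → ℕ) × Fin s) :=
      ((Fintype.piFinset fun _ : Fin n => Finset.range (q+1)) ×ˢ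
        (Finset.univ : Finset (Fin s))).filter
        (fun p => degOf dv p.1 + b p.2 ≤ q) with hT
    have hmemT : ∀ p : (Fin n → ℕ) × Fin s, degOf dv p.1 + b p.2 ≤ q → p ∈ T := by
      intro p hp
      rw [hT, Finset.mem_filter, Finset.mem_product]
      refine ⟨⟨Fintype.mem_piFinset.mpr fun k => Finset.mem_range.mpr ?_, Finset.mem_univ _⟩, hp⟩
      have h1 : p.1 k * dv k ≤ degOf dv p.1 :=
        Finset.single_le_sum (f := fun k => p.1 k * dv k) (fun _ _ => Nat.zero_le _)
          (Finset.mem_univ k)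
      have h2 : p.1 k ≤ p.1 k * dv k := Nat.le_mul_of_pos_right _ (hdv k)
      omega
    set μ : ((Fin n → ℕ) × Fin s) → ℕ := fun p => (T.filter fun x => O.lt x p).card with hμdef
    have hμlt : ∀ p p', p ∈ T → p' ∈ T → O.lt p' p → μ p' < μ p := by
      intro p p' hpT hp'T hlt
      have hsub : (T.filter fun x => O.lt x p') ⊆ (T.filter fun x => O.lt x p) := by
        intro x hx
        rw [Finset.mem_filter] at hx ⊢
        exact ⟨hx.1, O.lt_trans hx.2 hlt⟩
      exact Finset.card_lt_card ((Finset.ssubset_iff_of_subset hsub).mpr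
        ⟨p', Finset.mem_filter.mpr ⟨hp'T, hlt⟩,
          fun hc => O.lt_irrefl p' (Finset.mem_filter.mp hc).2⟩)
    have key : ∀ (N : ℕ) (ζ : Fin s → A), ζ ∈ Submodule.span A (Set.range g) →
        (∀ (α : Fin n → ℕ) (i : Fin s), S.basis.repr (ζ i) α ≠ 0 → degOf dv α + b i ≤ q) →
        (∀ p, S.IsLMMr O.lt ζ p → μ p < N) →
        ∃ f : Fin m → A,
          (∀ j, f j ∈ Submodule.span K {x : A | ∃ α, degOf dv α + nj j ≤ q ∧ x = S.basis α}) ∧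
          ζ = ∑ j, f j • g j := by
      intro N
      induction N with
      | zero =>
        intro ζ hζmem hζdeg hζμ
        rcases eq_or_ne ζ 0 with rfl | h0
        · exact ⟨0, fun j => zero_mem _, by simp⟩
        · obtain ⟨p, hp⟩ := S.exists_LMM O ζ h0
          exact absurd (hζμ p hp) (Nat.not_lt_zero _)
      | succ N ih =>
        intro ζ hζmem hζdeg hζμ
        rcases eq_or_ne ζ 0 with rfl | h0
        · exact ⟨0, fun j => zero_mem _, by simp⟩
        obtain ⟨gj, hgjG, pg, pζ, hLMg, hLMζ, hdvd⟩ := hGB.2.2 ζ hζmem h0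
        obtain ⟨j, rfl⟩ := hgjG
        obtain ⟨α, i⟩ := pg
        obtain ⟨β, itmp⟩ := pζ
        obtain ⟨hij, γ, hγ⟩ := hdvd
        dsimp only at hij
        subst hij
        have hβ : β = γ + α := SolvAlg.IsLM.unique hγ (S.isLM_mul_basis γ α)
        subst hβ
        -- fil-degree of `g j` equals the fil-degree of its leading monomial
        have hnj : nj j = degOf dv α + b i := by
          obtain ⟨α', i', hne', heq'⟩ := hnj₂ j
          have h1 : degOf dv α' + b i' ≤ degOf dv α + b i := by
            rcases eq_or_ne ((α', i') : (Fin n → ℕ) × Fin s) (α, i) with he | hne2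
            · obtain ⟨h1, h2⟩ := Prod.mk.injEq .. ▸ he
              subst h1; subst h2; exact le_rfl
            · exact hOgr _ _ (hLMg.2 (α', i') hne' hne2)
          have h2 : degOf dv α + b i ≤ nj j := hnj₁ j α i hLMg.1
          omega
        have hc1 : S.basis.repr (ζ i) (γ + α) ≠ 0 := hLMζ.1
        have hpζdeg : degOf dv (γ + α) + b i ≤ q := hζdeg (γ + α) i hc1
        -- lower monomials of `g j` stay away from the leading position after multiplying
        have claimA : ∀ α' ∈ (S.basis.repr (g j i)).support, α' ≠ α →
            S.basis.repr (S.basis γ * S.basis α') (γ + α) = 0 := by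
          intro α' hα' hne
          by_contra hc
          have hsup : (γ + α) ∈ (S.basis.repr (S.basis γ * S.basis α')).support :=
            Finsupp.mem_support_iff.mpr hc
          have hlt0 : O.lt ((α' : Fin n → ℕ), i) (α, i) :=
            hLMg.2 (α', i) (Finsupp.mem_support_iff.mp hα')
              (by simp [Prod.ext_iff, hne])
          have hlt2 : O.lt ((γ + α' : Fin n → ℕ), i) (γ + α, i) :=
            O.compat γ (γ + α') (γ + α) hlt0 (S.isLM_mul_basis γ α') hγ
          rcases eq_or_ne ((γ + α : Fin n → ℕ)) (γ + α') with he | hne2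
          · exact hne (add_left_cancel he).symm
          · exact O.lt_irrefl _
              (O.lt_trans (O.base _ _ i (S.s2_lower γ α' (γ + α) hsup hne2)) hlt2)
        -- the leading coefficient of `a^γ · (g j)`
        have hc2 : S.basis.repr (S.basis γ * g j i) (γ + α) =
            S.basis.repr (g j i) α * S.basis.repr (S.basis γ * S.basis α) (γ + α) := by
          rw [S.repr_basis_mul]
          exact Finset.sum_eq_single_of_mem α (Finsupp.mem_support_iff.mpr hLMg.1)
            (fun α' hα' hne => by rw [claimA α' hα' hne, mul_zero])
        have hc2ne : S.basis.repr (S.basis γ * g j i) (γ + α) ≠ 0 := by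
          rw [hc2]
          exact mul_ne_zero hLMg.1 (Finsupp.mem_support_iff.mp hγ.1)
        set c2 : K := S.basis.repr (S.basis γ * g j i) (γ + α) with hc2def
        set c : K := S.basis.repr (ζ i) (γ + α) * c2⁻¹ with hcdef
        set t : A := c • S.basis γ with htdef
        set ζ' : Fin s → A := ζ - t • g j with hζ'def
        have hcomp : ∀ i', ζ' i' = ζ i' - c • (S.basis γ * g j i') := by
          intro i'
          rw [hζ'def, Pi.sub_apply, Pi.smul_apply, htdef, smul_eq_mul, smul_mul_assoc]
        have hrepr : ∀ i' δ, S.basis.repr (ζ' i') δ =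
            S.basis.repr (ζ i') δ - c * S.basis.repr (S.basis γ * g j i') δ := by
          intro i' δ
          rw [hcomp i', map_sub, map_smul, Finsupp.sub_apply, Finsupp.smul_apply, smul_eq_mul]
        have hzero : S.basis.repr (ζ' i) (γ + α) = 0 := by
          rw [hrepr, hcdef, mul_assoc, inv_mul_cancel₀ hc2ne, mul_one, sub_self]
        have hζ'deg : ∀ (δ : Fin n → ℕ) (i' : Fin s),
            S.basis.repr (ζ' i') δ ≠ 0 → degOf dv δ + b i' ≤ q := by
          intro δ i' hne
          rw [hrepr] at hne
          by_cases h1 : S.basis.repr (ζ i') δ = 0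
          · have h2 : S.basis.repr (S.basis γ * g j i') δ ≠ 0 := by
              intro h2
              exact hne (by rw [h1, h2, mul_zero, sub_zero])
            obtain ⟨α', hα', hle⟩ := S.repr_basis_mul_deg dv hgr h2
            have h3 : degOf dv α' + b i' ≤ nj j :=
              hnj₁ j α' i' (Finsupp.mem_support_iff.mp hα')
            rw [hnj] at h3
            rw [degOf_add] at hpζdeg
            omega
          · exact hζdeg δ i' h1
        have hζ'lt : ∀ p', p' ∈ S.MSupp ζ' → O.lt p' (γ + α, i) := by
          rintro ⟨δ, i'⟩ hp'
          have hne0 : ((δ, i') : (Fin n → ℕ) × Fin s) ≠ (γ + α, i) := by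
            intro he
            obtain ⟨h1, h2⟩ := Prod.mk.injEq .. ▸ he
            subst h1; subst h2
            exact hp' hzero
          have hcase : S.basis.repr (ζ i') δ ≠ 0 ∨
              S.basis.repr (S.basis γ * g j i') δ ≠ 0 := by
            by_contra hcon
            push_neg at hcon
            exact hp' (by rw [hrepr, hcon.1, hcon.2, mul_zero, sub_zero])
          rcases hcase with h | h
          · exact hLMζ.2 (δ, i') h hne0
          · obtain ⟨α', hα', hne2⟩ := S.repr_basis_mul_support h
            have hsup : δ ∈ (S.basis.repr (S.basis γ * S.basis α')).support :=
              Finsupp.mem_support_iff.mpr hne2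
            rcases eq_or_ne ((α', i') : (Fin n → ℕ) × Fin s) (α, i) with he | hne3
            · have h1 : α' = α := congrArg Prod.fst he
              have h2 : i' = i := congrArg Prod.snd he
              rw [h1] at hsup
              rw [h2]
              have hδne : δ ≠ γ + α := fun hh => hne0 (by rw [hh, h2])
              exact O.base _ _ _ (S.s2_lower γ α δ hsup hδne)
            · have hlt1 : O.lt (α', i') (α, i) :=
                hLMg.2 (α', i') (Finsupp.mem_support_iff.mp hα') hne3
              have hlt2 : O.lt ((γ + α' : Fin n → ℕ), i') (γ + α, i) :=
                O.compat γ (γ + α') (γ + α) hlt1 (S.isLM_mul_basis γ α') hγ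
              rcases eq_or_ne δ (γ + α') with rfl | hne4
              · exact hlt2
              · exact O.lt_trans (O.base _ _ _ (S.s2_lower γ α' δ hsup hne4)) hlt2
        have hζ'mem : ζ' ∈ Submodule.span A (Set.range g) :=
          Submodule.sub_mem _ hζmem
            (Submodule.smul_mem _ t (Submodule.subset_span ⟨j, rfl⟩))
        have hζ'μ : ∀ p', S.IsLMMr O.lt ζ' p' → μ p' < N := by
          intro p' hp'
          have hlt := hζ'lt p' hp'.1
          have hp'T : p' ∈ T := hmemT p' (hζ'deg p'.1 p'.2 hp'.1)
          have hpT : ((γ + α : Fin n → ℕ), i) ∈ T := hmemT _ hpζdeg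
          have h1 : μ p' < μ (γ + α, i) := hμlt _ _ hpT hp'T hlt
          have h2 : μ (γ + α, i) < N + 1 := hζμ _ hLMζ
          omega
        obtain ⟨f', hf'mem, hf'eq⟩ := ih ζ' hζ'mem hζ'deg hζ'μ
        refine ⟨fun j' => f' j' + (if j' = j then t else 0), ?_, ?_⟩
        · intro j'
          dsimp only
          by_cases hne : j' = j
          · rw [if_pos hne, hne, htdef]
            refine add_mem (hf'mem j)
              (Submodule.smul_mem _ c (Submodule.subset_span ?_))
            refine ⟨γ, ?_, rfl⟩
            rw [hnj]
            rw [degOf_add] at hpζdeg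
            omega
          · rw [if_neg hne, add_zero]
            exact hf'mem j'
        · dsimp only
          have hsum : ∑ j', (f' j' + (if j' = j then t else 0)) • g j' =
              (∑ j', f' j' • g j') + t • g j := by
            rw [Finset.sum_congr rfl
              (fun j' _ => by rw [add_smul]), Finset.sum_add_distrib]
            congr 1
            rw [Finset.sum_eq_single j
              (fun j' _ hne => by rw [if_neg hne, zero_smul])
              (fun h => absurd (Finset.mem_univ j) h)]
            simp
          rw [hsum, ← hf'eq, hζ'def]
          abel
    have hcard : ∀ p, S.IsLMMr O.lt ξ p → μ p < T.card + 1 :=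
      fun p _ => Nat.lt_succ_of_le (Finset.card_filter_le _ _)
    exact key (T.card + 1) ξ hmem hdeg hcard
  · -- backward direction
    rintro ⟨f, hf, rfl⟩
    constructor
    · exact Submodule.sum_mem _ fun j _ =>
        Submodule.smul_mem _ _ (Submodule.subset_span ⟨j, rfl⟩)
    · intro α i hα
      have heq : S.basis.repr ((∑ j, f j • g j) i) α =
          ∑ j, S.basis.repr (f j * g j i) α := by
        rw [Finset.sum_apply, map_sum, Finsupp.finset_sum_apply]
        rfl
      rw [heq] at hα
      obtain ⟨j, -, hj⟩ := Finset.exists_ne_zero_of_sum_ne_zero hα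
      have hprop : ∀ x ∈ Submodule.span K
          {x : A | ∃ α0, degOf dv α0 + nj j ≤ q ∧ x = S.basis α0},
          ∀ (δ : Fin n → ℕ) (i' : Fin s),
            S.basis.repr (x * g j i') δ ≠ 0 → degOf dv δ + b i' ≤ q := by
        intro x hx
        induction hx using Submodule.span_induction with
        | mem x hx =>
          obtain ⟨α0, hα0, rfl⟩ := hx
          intro δ i' hδ
          obtain ⟨α', hα', hle⟩ := S.repr_basis_mul_deg dv hgr hδ
          have := hnj₁ j α' i' (Finsupp.mem_support_iff.mp hα')
          omega
        | zero =>
          intro δ i' hδ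
          rw [zero_mul, map_zero] at hδ
          exact absurd rfl hδ
        | add x y hx hy ihx ihy =>
          intro δ i' hδ
          by_cases h1 : S.basis.repr (x * g j i') δ = 0
          · refine ihy δ i' fun h2 => hδ ?_
            rw [add_mul, map_add, Finsupp.add_apply, h1, h2, add_zero]
          · exact ihx δ i' h1
        | smul k x hx ihx =>
          intro δ i' hδ
          refine ihx δ i' fun h => hδ ?_
          rw [smul_mul_assoc, map_smul, Finsupp.smul_apply, h, smul_zero]
      exact hprop (f j) (hf j) α i hj
end
end
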